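/- arXiv:1704.02267 — 2 statements merged into one kernel-verified Lean document; each statement's English description precedes it below -/
import Mathlib

section
/- (Proposition 2.1) Assume the TBT matrix T is invertible. Then for both p = 1 and p = 2, and for all complex λ1, λ2 ≠ i/2 and μ1, μ2 ≠ −i/2 with λ_p ≠ μ_p, one has ω(λ, μ) = i·(λ_p − μ_p)^{-1} · u(μ) · P_p · û(λ). -/
open Matrix

noncomputable section

/-- The scalar sequence `a_r`: `0` for `r < 0`, `i/2` for `r = 0`, `i` for `r > 0`. -/
def aC (r : ℤ) : ℂ := if r < 0 then 0 else if r = 0 then Complex.I / 2 else Complex.I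

/-- `A_1`: block matrix `{𝒜_{1,p−q}}` with blocks `0`, `(i/2)I_m`, `i·I_m`. -/
def A1 (m n : ℕ) : Matrix (Fin n × Fin m) (Fin n × Fin m) ℂ :=
  Matrix.of fun r c => if r.2 = c.2 then aC (((r.1 : ℕ) : ℤ) - ((c.1 : ℕ) : ℤ)) else 0

/-- `A_2 = diag{𝒜_{2,0}, …, 𝒜_{2,0}}`. -/
def A2 (m n : ℕ) : Matrix (Fin n × Fin m) (Fin n × Fin m) ℂ :=
  Matrix.of fun r c => if r.1 = c.1 then aC (((r.2 : ℕ) : ℤ) - ((c.2 : ℕ) : ℤ)) else 0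

/-- `𝒜_1 = {a_{j−ℓ}}_{j,ℓ=1}^n`. -/
def calA1 (n : ℕ) : Matrix (Fin n) (Fin n) ℂ :=
  Matrix.of fun p q => aC (((p : ℕ) : ℤ) - ((q : ℕ) : ℤ))

/-- `𝒜_2 = {a_{j−ℓ}}_{j,ℓ=1}^m`. -/
def calA2 (m : ℕ) : Matrix (Fin m) (Fin m) ℂ :=
  Matrix.of fun j l => aC (((j : ℕ) : ℤ) - ((l : ℕ) : ℤ))

/-- The Toeplitz-block Toeplitz matrix `T`, entry `t_{p−q}^{(j−ℓ)}`. -/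
def TBT (m n : ℕ) (t : ℤ → ℤ → ℂ) : Matrix (Fin n × Fin m) (Fin n × Fin m) ℂ :=
  Matrix.of fun r c =>
    t (((r.1 : ℕ) : ℤ) - ((c.1 : ℕ) : ℤ)) (((r.2 : ℕ) : ℤ) - ((c.2 : ℕ) : ℤ))

/-- `M_{11}`: block column, `p`-th block `(1/2)𝒯_0 + Σ_{s=1}^{p−1} 𝒯_s`. -/
def M11 (m n : ℕ) (t : ℤ → ℤ → ℂ) : Matrix (Fin n × Fin m) (Fin m) ℂ :=
  Matrix.of fun r l => (1 / 2 : ℂ) * t 0 (((r.2 : ℕ) : ℤ) - ((l : ℕ) : ℤ))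
    + ∑ s ∈ Finset.range (r.1 : ℕ), t ((s : ℤ) + 1) (((r.2 : ℕ) : ℤ) - ((l : ℕ) : ℤ))

/-- `M_{21} = [I_m I_m … I_m]`. -/
def M21 (m n : ℕ) : Matrix (Fin m) (Fin n × Fin m) ℂ :=
  Matrix.of fun j c => if j = c.2 then 1 else 0

/-- `M_{31} = M_{21}^*`. -/
def M31 (m n : ℕ) : Matrix (Fin n × Fin m) (Fin m) ℂ := (M21 m n)ᴴ

/-- `M_{41}`: block row, `q`-th block `(1/2)𝒯_0 + Σ_{s=1}^{q−1} 𝒯_{−s}`. -/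
def M41 (m n : ℕ) (t : ℤ → ℤ → ℂ) : Matrix (Fin m) (Fin n × Fin m) ℂ :=
  Matrix.of fun j c => (1 / 2 : ℂ) * t 0 (((j : ℕ) : ℤ) - ((c.2 : ℕ) : ℤ))
    + ∑ s ∈ Finset.range (c.1 : ℕ), t (-((s : ℤ) + 1)) (((j : ℕ) : ℤ) - ((c.2 : ℕ) : ℤ))

/-- `j`-th entry of the column `ℳ_{12}^{(r)}`. -/
def m12e (m : ℕ) (t : ℤ → ℤ → ℂ) (r : ℤ) (j : Fin m) : ℂ :=
  (1 / 2 : ℂ) * t r 0 + ∑ s ∈ Finset.range (j : ℕ), t r ((s : ℤ) + 1)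

/-- `ℓ`-th entry of the row `ℳ_{42}^{(r)}`. -/
def m42e (m : ℕ) (t : ℤ → ℤ → ℂ) (r : ℤ) (l : Fin m) : ℂ :=
  (1 / 2 : ℂ) * t r 0 + ∑ s ∈ Finset.range (l : ℕ), t r (-((s : ℤ) + 1))

/-- `M_{12} = {ℳ_{12}^{(p−q)}}`. -/
def M12 (m n : ℕ) (t : ℤ → ℤ → ℂ) : Matrix (Fin n × Fin m) (Fin n) ℂ :=
  Matrix.of fun r q => m12e m t (((r.1 : ℕ) : ℤ) - ((q : ℕ) : ℤ)) r.2

/-- `M_{22}`. -/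
def M22 (m n : ℕ) : Matrix (Fin n) (Fin n × Fin m) ℂ :=
  Matrix.of fun p c => if p = c.1 then 1 else 0

/-- `M_{32} = M_{22}^*`. -/
def M32 (m n : ℕ) : Matrix (Fin n × Fin m) (Fin n) ℂ := (M22 m n)ᴴ

/-- `M_{42} = {ℳ_{42}^{(p−q)}}`. -/
def M42 (m n : ℕ) (t : ℤ → ℤ → ℂ) : Matrix (Fin n) (Fin n × Fin m) ℂ :=
  Matrix.of fun p c => m42e m t (((p : ℕ) : ℤ) - ((c.1 : ℕ) : ℤ)) c.2

/-- `K`: the `1×mn` row, `q`-th block `(1/2)ℳ_{42}^{(0)} + Σ_{s=1}^{q−1} ℳ_{42}^{(−s)}`. -/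
def Krow (m n : ℕ) (t : ℤ → ℤ → ℂ) : (Fin n × Fin m) → ℂ :=
  fun c => (1 / 2 : ℂ) * m42e m t 0 c.2
    + ∑ s ∈ Finset.range (c.1 : ℕ), m42e m t (-((s : ℤ) + 1)) c.2

/-- `K_{11}`: `p`-th row `(1/2)ℳ_{42}^{(0)} + Σ_{s=1}^{p−1} ℳ_{42}^{(s)}`. -/
def K11 (m n : ℕ) (t : ℤ → ℤ → ℂ) : Matrix (Fin n) (Fin m) ℂ :=
  Matrix.of fun p l => (1 / 2 : ℂ) * m42e m t 0 l
    + ∑ s ∈ Finset.range (p : ℕ), m42e m t ((s : ℤ) + 1) l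

/-- `K_{12}`: `q`-th column `(1/2)ℳ_{12}^{(0)} + Σ_{s=1}^{q−1} ℳ_{12}^{(−s)}`. -/
def K12 (m n : ℕ) (t : ℤ → ℤ → ℂ) : Matrix (Fin m) (Fin n) ℂ :=
  Matrix.of fun j q => (1 / 2 : ℂ) * m12e m t 0 j
    + ∑ s ∈ Finset.range (q : ℕ), m12e m t (-((s : ℤ) + 1)) j

/-- `Π_1 = [M_{11} M_{31}]`. -/
def Pi1 (m n : ℕ) (t : ℤ → ℤ → ℂ) : Matrix (Fin n × Fin m) (Fin m ⊕ Fin m) ℂ :=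
  fromCols (M11 m n t) (M31 m n)

/-- `Π_2 = [M_{12} M_{32}]`. -/
def Pi2 (m n : ℕ) (t : ℤ → ℤ → ℂ) : Matrix (Fin n × Fin m) (Fin n ⊕ Fin n) ℂ :=
  fromCols (M12 m n t) (M32 m n)

/-- `Π̂_1 = col[M_{21}; M_{41}]`. -/
def PiHat1 (m n : ℕ) (t : ℤ → ℤ → ℂ) : Matrix (Fin m ⊕ Fin m) (Fin n × Fin m) ℂ :=
  fromRows (M21 m n) (M41 m n t)

/-- `Π̂_2 = col[M_{22}; M_{42}]`. -/
def PiHat2 (m n : ℕ) (t : ℤ → ℤ → ℂ) : Matrix (Fin n ⊕ Fin n) (Fin n × Fin m) ℂ :=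
  fromRows (M22 m n) (M42 m n t)

/-- All-ones vector. -/
def onesV (k : Type*) : k → ℂ := fun _ => 1

/-- `g_{12} = i·Π̂_1 T^{-1} Π_2 − i·[[𝟏_m 𝟏_n^*, 0],[K_{12}, 0]]`. -/
def g12M (m n : ℕ) (t : ℤ → ℤ → ℂ) : Matrix (Fin m ⊕ Fin m) (Fin n ⊕ Fin n) ℂ :=
  Complex.I • (PiHat1 m n t * (TBT m n t)⁻¹ * Pi2 m n t)
    - Complex.I • fromBlocks (vecMulVec (onesV (Fin m)) (onesV (Fin n))) 0 (K12 m n t) 0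

/-- `g_{21} = i·Π̂_2 T^{-1} Π_1 − i·[[𝟏_n 𝟏_m^*, 0],[K_{11}, 0]]`. -/
def g21M (m n : ℕ) (t : ℤ → ℤ → ℂ) : Matrix (Fin n ⊕ Fin n) (Fin m ⊕ Fin m) ℂ :=
  Complex.I • (PiHat2 m n t * (TBT m n t)⁻¹ * Pi1 m n t)
    - Complex.I • fromBlocks (vecMulVec (onesV (Fin n)) (onesV (Fin m))) 0 (K11 m n t) 0

/-- The `k×k` flip (anti-diagonal) matrix. -/
def flipU (k : ℕ) : Matrix (Fin k) (Fin k) ℂ :=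
  Matrix.of fun p q => if (p : ℕ) + (q : ℕ) + 1 = k then 1 else 0

/-- `U_{2k}`, the `2k×2k` flip matrix on the sum type. -/
def U2 (k : ℕ) : Matrix (Fin k ⊕ Fin k) (Fin k ⊕ Fin k) ℂ :=
  fromBlocks 0 (flipU k) (flipU k) 0

/-- `J_{2k} = diag{I_k, −I_k}`. -/
def J2 (k : ℕ) : Matrix (Fin k ⊕ Fin k) (Fin k ⊕ Fin k) ℂ :=
  fromBlocks 1 0 0 (-1)

/-- `U = U_{mn}`, the `mn×mn` flip matrix (global index `m·p + j`). -/
def UmnM (m n : ℕ) : Matrix (Fin n × Fin m) (Fin n × Fin m) ℂ :=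
  Matrix.of fun r c =>
    if m * (r.1 : ℕ) + (r.2 : ℕ) + (m * (c.1 : ℕ) + (c.2 : ℕ)) + 1 = m * n then 1 else 0

/-- `ψ(λ) = (λ + i/2)/(λ − i/2)`. -/
def psiM (l : ℂ) : ℂ := (l + Complex.I / 2) / (l - Complex.I / 2)

/-- `h(y_1, y_2)`, entry `y_1^{p−1} y_2^{j−1}`. -/
def hVec (m n : ℕ) (y1 y2 : ℂ) : (Fin n × Fin m) → ℂ :=
  fun r => y1 ^ (r.1 : ℕ) * y2 ^ (r.2 : ℕ)

/-- `ω(λ,μ) = 𝟏^*(A_1^*−μ_1)^{-1}(A_2^*−μ_2)^{-1}T^{-1}(A_2−λ_2)^{-1}(A_1−λ_1)^{-1}𝟏`. -/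
def omegaF (m n : ℕ) (t : ℤ → ℤ → ℂ) (l1 l2 u1 u2 : ℂ) : ℂ :=
  star (onesV (Fin n × Fin m)) ⬝ᵥ
    ((((A1 m n)ᴴ - u1 • 1)⁻¹ * ((A2 m n)ᴴ - u2 • 1)⁻¹ * (TBT m n t)⁻¹ *
      (A2 m n - l2 • 1)⁻¹ * (A1 m n - l1 • 1)⁻¹) *ᵥ onesV (Fin n × Fin m))

/-- `ρ(y,z) = h(conj z_1, conj z_2)^* T^{-1} h(y_1,y_2)`. -/
def rhoF (m n : ℕ) (t : ℤ → ℤ → ℂ) (y1 y2 z1 z2 : ℂ) : ℂ :=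
  star (hVec m n ((starRingEnd ℂ) z1) ((starRingEnd ℂ) z2)) ⬝ᵥ
    ((TBT m n t)⁻¹ *ᵥ hVec m n y1 y2)

/-- `Γ_1 = T^{-1}Π_1`. -/
def Gam1 (m n : ℕ) (t : ℤ → ℤ → ℂ) : Matrix (Fin n × Fin m) (Fin m ⊕ Fin m) ℂ :=
  (TBT m n t)⁻¹ * Pi1 m n t

/-- `Γ_2 = T^{-1}Π_2`. -/
def Gam2 (m n : ℕ) (t : ℤ → ℤ → ℂ) : Matrix (Fin n × Fin m) (Fin n ⊕ Fin n) ℂ :=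
  (TBT m n t)⁻¹ * Pi2 m n t

/-- `Γ̂_1 = Π̂_1 T^{-1}`. -/
def GamHat1 (m n : ℕ) (t : ℤ → ℤ → ℂ) : Matrix (Fin m ⊕ Fin m) (Fin n × Fin m) ℂ :=
  PiHat1 m n t * (TBT m n t)⁻¹

/-- `Γ̂_2 = Π̂_2 T^{-1}`. -/
def GamHat2 (m n : ℕ) (t : ℤ → ℤ → ℂ) : Matrix (Fin n ⊕ Fin n) (Fin n × Fin m) ℂ :=
  PiHat2 m n t * (TBT m n t)⁻¹

/-- `Γ = [Γ_1 Γ_2]`. -/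
def GammaFull (m n : ℕ) (t : ℤ → ℤ → ℂ) :
    Matrix (Fin n × Fin m) ((Fin m ⊕ Fin m) ⊕ (Fin n ⊕ Fin n)) ℂ :=
  fromCols (Gam1 m n t) (Gam2 m n t)

/-- `Γ̂ = col[Γ̂_1; Γ̂_2]`. -/
def GammaHatFull (m n : ℕ) (t : ℤ → ℤ → ℂ) :
    Matrix ((Fin m ⊕ Fin m) ⊕ (Fin n ⊕ Fin n)) (Fin n × Fin m) ℂ :=
  fromRows (GamHat1 m n t) (GamHat2 m n t)

/-- The row vector `u(μ)`. -/
def uRow (m n : ℕ) (t : ℤ → ℤ → ℂ) (u1 u2 : ℂ) :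
    ((Fin m ⊕ Fin m) ⊕ (Fin n ⊕ Fin n)) → ℂ :=
  star (onesV (Fin n × Fin m)) ᵥ*
      (((A1 m n)ᴴ - u1 • 1)⁻¹ * ((A2 m n)ᴴ - u2 • 1)⁻¹ * GammaFull m n t)
    - Complex.I • Sum.elim
        (Sum.elim (star (onesV (Fin m)) ᵥ* ((calA2 m)ᴴ - u2 • 1)⁻¹) (0 : Fin m → ℂ))
        (Sum.elim (star (onesV (Fin n)) ᵥ* ((calA1 n)ᴴ - u1 • 1)⁻¹) (0 : Fin n → ℂ))

/-- The column vector `û(λ)`. -/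
def uHatCol (m n : ℕ) (t : ℤ → ℤ → ℂ) (l1 l2 : ℂ) :
    ((Fin m ⊕ Fin m) ⊕ (Fin n ⊕ Fin n)) → ℂ :=
  (GammaHatFull m n t * (A2 m n - l2 • 1)⁻¹ * (A1 m n - l1 • 1)⁻¹) *ᵥ onesV (Fin n × Fin m)
    + Complex.I • Sum.elim
        (Sum.elim (0 : Fin m → ℂ) ((calA2 m - l2 • 1)⁻¹ *ᵥ onesV (Fin m)))
        (Sum.elim (0 : Fin n → ℂ) ((calA1 n - l1 • 1)⁻¹ *ᵥ onesV (Fin n)))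

/-- `P_1 = diag{I_{2m}, 0}`. -/
def P1M (m n : ℕ) :
    Matrix ((Fin m ⊕ Fin m) ⊕ (Fin n ⊕ Fin n)) ((Fin m ⊕ Fin m) ⊕ (Fin n ⊕ Fin n)) ℂ :=
  fromBlocks 1 0 0 0

/-- `P_2 = I − P_1`. -/
def P2M (m n : ℕ) :
    Matrix ((Fin m ⊕ Fin m) ⊕ (Fin n ⊕ Fin n)) ((Fin m ⊕ Fin m) ⊕ (Fin n ⊕ Fin n)) ℂ :=
  1 - P1M m n

/-- `G(λ)`, built from `g_{12}` and `g_{21}`. -/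
def GMat (m n : ℕ) (g12 : Matrix (Fin m ⊕ Fin m) (Fin n ⊕ Fin n) ℂ)
    (g21 : Matrix (Fin n ⊕ Fin n) (Fin m ⊕ Fin m) ℂ) (l1 l2 : ℂ) :
    Matrix ((Fin m ⊕ Fin m) ⊕ (Fin n ⊕ Fin n)) ((Fin m ⊕ Fin m) ⊕ (Fin n ⊕ Fin n)) ℂ :=
  fromBlocks (fromBlocks (calA2 m - l2 • 1) 0 0 (calA2 m - l2 • 1)) g12
             g21 (fromBlocks (calA1 n - l1 • 1) 0 0 (calA1 n - l1 • 1))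

/-- `G` as a matrix over the polynomial ring `ℂ[λ_1, λ_2]` (variables `X 0 = λ_1`, `X 1 = λ_2`). -/
def GPoly (m n : ℕ) (g12 : Matrix (Fin m ⊕ Fin m) (Fin n ⊕ Fin n) ℂ)
    (g21 : Matrix (Fin n ⊕ Fin n) (Fin m ⊕ Fin m) ℂ) :
    Matrix ((Fin m ⊕ Fin m) ⊕ (Fin n ⊕ Fin n)) ((Fin m ⊕ Fin m) ⊕ (Fin n ⊕ Fin n))
      (MvPolynomial (Fin 2) ℂ) :=
  fromBlocks
    (fromBlocks ((calA2 m).map MvPolynomial.C - (MvPolynomial.X 1 : MvPolynomial (Fin 2) ℂ) • 1) 0 0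
      ((calA2 m).map MvPolynomial.C - (MvPolynomial.X 1 : MvPolynomial (Fin 2) ℂ) • 1))
    (g12.map MvPolynomial.C)
    (g21.map MvPolynomial.C)
    (fromBlocks ((calA1 n).map MvPolynomial.C - (MvPolynomial.X 0 : MvPolynomial (Fin 2) ℂ) • 1) 0 0
      ((calA1 n).map MvPolynomial.C - (MvPolynomial.X 0 : MvPolynomial (Fin 2) ℂ) • 1))

/-- The vector `col[0_m; 𝟏_m; 0_n; 𝟏_n]`. -/
def eVec (m n : ℕ) : ((Fin m ⊕ Fin m) ⊕ (Fin n ⊕ Fin n)) → ℂ :=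
  Sum.elim (Sum.elim (0 : Fin m → ℂ) (onesV (Fin m))) (Sum.elim (0 : Fin n → ℂ) (onesV (Fin n)))

/-- `diag{J_{2m}U_{2m}, J_{2n}U_{2n}}`. -/
def DJU (m n : ℕ) :
    Matrix ((Fin m ⊕ Fin m) ⊕ (Fin n ⊕ Fin n)) ((Fin m ⊕ Fin m) ⊕ (Fin n ⊕ Fin n)) ℂ :=
  fromBlocks (J2 m * U2 m) 0 0 (J2 n * U2 n)

/-- The block column `col[I_m; I_m; …; I_m]`. -/
def EcolId (m n : ℕ) : Matrix (Fin n × Fin m) (Fin m) ℂ :=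
  Matrix.of fun r l => if r.2 = l then 1 else 0


section Aux

open Finset

lemma aC_neg {r : ℤ} (h : r < 0) : aC r = 0 := by simp [aC, h]

lemma aC_zero : aC 0 = Complex.I / 2 := by simp [aC]

lemma aC_pos {r : ℤ} (h : 0 < r) : aC r = Complex.I := by
  simp [aC, not_lt.2 h.le, h.ne']

lemma conj_aC_neg {r : ℤ} (h : r < 0) : (starRingEnd ℂ) (aC r) = 0 := by simp [aC_neg h]

lemma conj_aC_zero : (starRingEnd ℂ) (aC 0) = -(Complex.I / 2) := by
  rw [aC_zero, map_div₀, Complex.conj_I, Complex.conj_ofNat]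
  ring

lemma conj_aC_pos {r : ℤ} (h : 0 < r) : (starRingEnd ℂ) (aC r) = -Complex.I := by
  simp [aC_pos h, Complex.conj_I]

lemma keyT (f : ℤ → ℂ) (p q : ℕ) :
    f ((p:ℤ) - q) + (∑ s ∈ Finset.range p, f ((s:ℤ) - q))
      + ∑ s ∈ Finset.range q, f ((p:ℤ) - s)
    = f 0 + (∑ s ∈ Finset.range p, f ((s:ℤ) + 1))
      + ∑ s ∈ Finset.range q, f (-((s:ℤ)+1)) := by
  induction q with
  | zero =>
      have h1 := Finset.sum_range_succ (fun s : ℕ => f s) p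
      have h2 := Finset.sum_range_succ' (fun s : ℕ => f s) p
      push_cast at h1 h2
      simp only [Nat.cast_zero, sub_zero, Finset.sum_range_zero, add_zero]
      linear_combination h2 - h1
  | succ q ih =>
      have h1 := Finset.sum_range_succ (fun s : ℕ => f ((s:ℤ) - ((q:ℤ)+1))) p
      have h2 := Finset.sum_range_succ' (fun s : ℕ => f ((s:ℤ) - ((q:ℤ)+1))) p
      push_cast at h1 h2 ⊢
      have e3 : (∑ s ∈ Finset.range p, f ((s:ℤ) + 1 - ((q:ℤ)+1)))
          = ∑ s ∈ Finset.range p, f ((s:ℤ) - q) :=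
        Finset.sum_congr rfl (fun s _ => by congr 1; ring)
      have h3 := Finset.sum_range_succ (fun s : ℕ => f ((p:ℤ) - s)) q
      have h4 := Finset.sum_range_succ (fun s : ℕ => f (-((s:ℤ)+1))) q
      push_cast at h3 h4
      rw [h3, h4]
      have e4 : f ((0:ℤ) - ((q:ℤ)+1)) = f (-((q:ℤ)+1)) := by norm_num
      linear_combination h2 - h1 + e3 + e4 + ih

end Aux
section Disp
open Finset

lemma sumA {n : ℕ} (p : Fin n) (g : ℤ → ℂ) :
    ∑ s : Fin n, aC ((p:ℤ) - ((s:ℕ):ℤ)) * g ((s:ℕ):ℤ)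
      = Complex.I / 2 * g ((p:ℕ):ℤ) + Complex.I * ∑ s ∈ Finset.range (p:ℕ), g (s:ℤ) := by
  rw [Fin.sum_univ_eq_sum_range (fun s : ℕ => aC ((p:ℤ) - (s:ℤ)) * g (s:ℤ)) n]
  rw [← Finset.sum_subset (Finset.range_subset_range.2 p.isLt)
    (fun x _ hx => by
      have hpx : (p:ℤ) - (x:ℤ) < 0 := by
        have : (p:ℕ) < x := by
          by_contra hc
          exact hx (Finset.mem_range.2 (Nat.lt_succ_of_le (not_lt.1 hc)))
        omega
      rw [aC_neg hpx, zero_mul])]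
  rw [Finset.sum_range_succ]
  have e1 : ∀ s ∈ Finset.range (p:ℕ), aC ((p:ℤ) - (s:ℤ)) * g (s:ℤ) = Complex.I * g (s:ℤ) := by
    intro s hs
    rw [aC_pos (by have := Finset.mem_range.1 hs; omega)]
  rw [Finset.sum_congr rfl e1, ← Finset.mul_sum]
  rw [show (p:ℤ) - (p:ℤ) = 0 by ring, aC_zero]
  ring

lemma sumB {n : ℕ} (q : Fin n) (g : ℤ → ℂ) :
    ∑ s : Fin n, g ((s:ℕ):ℤ) * (starRingEnd ℂ) (aC ((q:ℤ) - ((s:ℕ):ℤ)))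
      = -(Complex.I / 2) * g ((q:ℕ):ℤ) - Complex.I * ∑ s ∈ Finset.range (q:ℕ), g (s:ℤ) := by
  rw [Fin.sum_univ_eq_sum_range (fun s : ℕ => g (s:ℤ) * (starRingEnd ℂ) (aC ((q:ℤ) - (s:ℤ)))) n]
  rw [← Finset.sum_subset (Finset.range_subset_range.2 q.isLt)
    (fun x _ hx => by
      have hpx : (q:ℤ) - (x:ℤ) < 0 := by
        have : (q:ℕ) < x := by
          by_contra hc
          exact hx (Finset.mem_range.2 (Nat.lt_succ_of_le (not_lt.1 hc)))
        omega
      rw [conj_aC_neg hpx, mul_zero])]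
  rw [Finset.sum_range_succ]
  have e1 : ∀ s ∈ Finset.range (q:ℕ), g (s:ℤ) * (starRingEnd ℂ) (aC ((q:ℤ) - (s:ℤ)))
      = -Complex.I * g (s:ℤ) := by
    intro s hs
    rw [conj_aC_pos (by have := Finset.mem_range.1 hs; omega)]
    ring
  rw [Finset.sum_congr rfl e1]
  rw [show (q:ℤ) - (q:ℤ) = 0 by ring, conj_aC_zero, ← Finset.mul_sum]
  ring

lemma disp1 (m n : ℕ) (t : ℤ → ℤ → ℂ) :
    A1 m n * TBT m n t - TBT m n t * (A1 m n)ᴴ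
      = Complex.I • (Pi1 m n t * PiHat1 m n t) := by
  ext ⟨p, j⟩ ⟨q, l⟩
  simp only [Matrix.sub_apply, Matrix.smul_apply, Matrix.mul_apply, smul_eq_mul,
    Fintype.sum_prod_type, Fintype.sum_sum_type, Pi1, PiHat1, Matrix.fromCols,
    Matrix.fromRows_apply_inl, Matrix.fromRows_apply_inr, Matrix.of_apply, Sum.elim_inl, Sum.elim_inr, A1, TBT,
    Matrix.conjTranspose_apply, M21, M31, M11, M41, ite_mul, mul_ite, zero_mul, mul_zero,
    apply_ite (star : ℂ → ℂ), Finset.sum_ite_eq, Finset.sum_ite_eq', Finset.mem_univ,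
    if_true, star_one, star_zero, mul_one, Complex.star_def]
  have hA := sumA p (fun z => t (z - ((q:ℕ):ℤ)) (((j:ℕ):ℤ) - ((l:ℕ):ℤ)))
  have hB := sumB q (fun z => t (((p:ℕ):ℤ) - z) (((j:ℕ):ℤ) - ((l:ℕ):ℤ)))
  have hk := keyT (fun r => t r (((j:ℕ):ℤ) - ((l:ℕ):ℤ))) p q
  beta_reduce at hA hB hk
  rw [hA, hB]
  linear_combination Complex.I * hk

end Disp

lemma disp2 (m n : ℕ) (t : ℤ → ℤ → ℂ) :
    A2 m n * TBT m n t - TBT m n t * (A2 m n)ᴴ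
      = Complex.I • (Pi2 m n t * PiHat2 m n t) := by
  ext ⟨p, j⟩ ⟨q, l⟩
  simp only [Matrix.sub_apply, Matrix.smul_apply, Matrix.mul_apply, smul_eq_mul,
    Fintype.sum_prod_type, Fintype.sum_sum_type, Pi2, PiHat2, Matrix.fromCols,
    Matrix.fromRows_apply_inl, Matrix.fromRows_apply_inr, Matrix.of_apply, Sum.elim_inl, Sum.elim_inr, A2, TBT,
    Matrix.conjTranspose_apply, M22, M32, M12, M42, m12e, m42e, ite_mul, mul_ite,
    zero_mul, mul_zero,
    apply_ite (star : ℂ → ℂ), Finset.sum_ite_irrel, Finset.sum_const_zero, Finset.sum_ite_eq, Finset.sum_ite_eq',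
    Finset.mem_univ, if_true, star_one, star_zero, mul_one, Complex.star_def]
  have hA := sumA j (fun z => t (((p:ℕ):ℤ) - ((q:ℕ):ℤ)) (z - ((l:ℕ):ℤ)))
  have hB := sumB l (fun z => t (((p:ℕ):ℤ) - ((q:ℕ):ℤ)) (((j:ℕ):ℤ) - z))
  have hk := keyT (fun r => t (((p:ℕ):ℤ) - ((q:ℕ):ℤ)) r) j l
  beta_reduce at hA hB hk
  rw [hA, hB]
  linear_combination Complex.I * hk
section Kron
open Kronecker

lemma X1_kron (m n : ℕ) (c : ℂ) :
    A1 m n - c • 1 = (calA1 n - c • 1) ⊗ₖ (1 : Matrix (Fin m) (Fin m) ℂ) := by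
  ext ⟨p, j⟩ ⟨q, l⟩
  by_cases h1 : p = q <;> by_cases h2 : j = l <;>
    simp [A1, calA1, Matrix.one_apply, Prod.ext_iff, h1, h2]

lemma Y1_kron (m n : ℕ) (c : ℂ) :
    (A1 m n)ᴴ - c • 1 = ((calA1 n)ᴴ - c • 1) ⊗ₖ (1 : Matrix (Fin m) (Fin m) ℂ) := by
  ext ⟨p, j⟩ ⟨q, l⟩
  by_cases h1 : p = q <;> by_cases h2 : j = l <;>
    simp [A1, calA1, Matrix.one_apply, Matrix.conjTranspose_apply, Prod.ext_iff, h1, h2,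
      eq_comm]

lemma X2_kron (m n : ℕ) (c : ℂ) :
    A2 m n - c • 1 = (1 : Matrix (Fin n) (Fin n) ℂ) ⊗ₖ (calA2 m - c • 1) := by
  ext ⟨p, j⟩ ⟨q, l⟩
  by_cases h1 : p = q <;> by_cases h2 : j = l <;>
    simp [A2, calA2, Matrix.one_apply, Prod.ext_iff, h1, h2]

lemma Y2_kron (m n : ℕ) (c : ℂ) :
    (A2 m n)ᴴ - c • 1 = (1 : Matrix (Fin n) (Fin n) ℂ) ⊗ₖ ((calA2 m)ᴴ - c • 1) := by
  ext ⟨p, j⟩ ⟨q, l⟩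
  by_cases h1 : p = q <;> by_cases h2 : j = l <;>
    simp [A2, calA2, Matrix.one_apply, Matrix.conjTranspose_apply, Prod.ext_iff, h1, h2,
      eq_comm]

lemma kron_comm {m n : ℕ} (a : Matrix (Fin n) (Fin n) ℂ) (b : Matrix (Fin m) (Fin m) ℂ) :
    (a ⊗ₖ (1 : Matrix (Fin m) (Fin m) ℂ)) * ((1 : Matrix (Fin n) (Fin n) ℂ) ⊗ₖ b)
      = ((1 : Matrix (Fin n) (Fin n) ℂ) ⊗ₖ b) * (a ⊗ₖ (1 : Matrix (Fin m) (Fin m) ℂ)) := by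
  rw [← Matrix.mul_kronecker_mul, ← Matrix.mul_kronecker_mul, mul_one, one_mul, mul_one, one_mul]

lemma det_kron_left {m n : ℕ} (a : Matrix (Fin n) (Fin n) ℂ) :
    (a ⊗ₖ (1 : Matrix (Fin m) (Fin m) ℂ)).det = a.det ^ m := by
  rw [Matrix.det_kronecker, Matrix.det_one, one_pow, mul_one, Fintype.card_fin]

lemma det_kron_right {m n : ℕ} (b : Matrix (Fin m) (Fin m) ℂ) :
    ((1 : Matrix (Fin n) (Fin n) ℂ) ⊗ₖ b).det = b.det ^ n := by
  rw [Matrix.det_kronecker, Matrix.det_one, one_pow, one_mul, Fintype.card_fin]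

lemma det_calA_sub (k : ℕ) (c : ℂ) :
    (calA1 k - c • 1).det = (Complex.I / 2 - c) ^ k := by
  have htri : (calA1 k - c • 1).BlockTriangular OrderDual.toDual := by
    intro i j hij
    have hij' : (i : Fin k) < j := hij
    have : ((i:ℕ):ℤ) - ((j:ℕ):ℤ) < 0 := by
      have := Fin.lt_iff_val_lt_val.1 hij'
      omega
    simp [calA1, Matrix.one_apply, aC_neg this, Fin.ne_of_lt hij']
  rw [Matrix.det_of_lowerTriangular _ htri]
  have : ∀ i : Fin k, (calA1 k - c • 1) i i = Complex.I / 2 - c := by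
    intro i
    simp [calA1, Matrix.one_apply, aC_zero]
  rw [Finset.prod_congr rfl (fun i _ => this i)]
  simp [Finset.card_univ]

lemma isUnit_det_calA_sub (k : ℕ) {c : ℂ} (h : c ≠ Complex.I / 2) :
    IsUnit (calA1 k - c • 1).det := by
  rw [det_calA_sub]
  exact (pow_ne_zero _ (sub_ne_zero.2 (fun e => h e.symm))).isUnit

lemma calA_conj_shift (k : ℕ) (c : ℂ) :
    (calA1 k)ᴴ - c • 1 = (calA1 k - (starRingEnd ℂ) c • 1)ᴴ := by
  rw [Matrix.conjTranspose_sub, Matrix.conjTranspose_smul]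
  simp

lemma isUnit_det_calA_conj_sub (k : ℕ) {c : ℂ} (h : c ≠ -(Complex.I / 2)) :
    IsUnit ((calA1 k)ᴴ - c • 1).det := by
  rw [calA_conj_shift, Matrix.det_conjTranspose]
  have : (starRingEnd ℂ) c ≠ Complex.I / 2 := by
    intro e
    apply h
    have := congrArg (starRingEnd ℂ) e
    simpa [Complex.conj_conj, map_div₀, Complex.conj_I, Complex.conj_ofNat, neg_div] using this
  have h2 := isUnit_det_calA_sub k this
  exact (IsUnit.star h2 : _)

lemma calA2_eq (m : ℕ) : calA2 m = calA1 m := rfl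

lemma inv_comm_left {k : Type*} [Fintype k] [DecidableEq k] {A B : Matrix k k ℂ}
    (h : A * B = B * A) (hA : IsUnit A.det) : A⁻¹ * B = B * A⁻¹ := by
  calc A⁻¹ * B = A⁻¹ * B * (A * A⁻¹) := by
        rw [Matrix.mul_nonsing_inv _ hA, Matrix.mul_one]
    _ = A⁻¹ * (B * A) * A⁻¹ := by rw [Matrix.mul_assoc, Matrix.mul_assoc, Matrix.mul_assoc]
    _ = A⁻¹ * (A * B) * A⁻¹ := by rw [h]
    _ = (A⁻¹ * A) * B * A⁻¹ := by rw [← Matrix.mul_assoc]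
    _ = B * A⁻¹ := by rw [Matrix.nonsing_inv_mul _ hA, Matrix.one_mul]

end Kron
section Inter

lemma star_onesV (k : Type*) : star (onesV k) = onesV k := by
  funext i
  simp [onesV, Pi.star_apply]

lemma M21_A2H (m n : ℕ) : M21 m n * (A2 m n)ᴴ = (calA2 m)ᴴ * M21 m n := by
  ext j ⟨q, l⟩
  simp only [Matrix.mul_apply, Fintype.sum_prod_type, M21, A2, calA2,
    Matrix.conjTranspose_apply, Matrix.of_apply, apply_ite (star : ℂ → ℂ), star_one,
    star_zero, ite_mul, mul_ite, one_mul, mul_one, zero_mul, mul_zero,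
    Finset.sum_ite_irrel, Finset.sum_const_zero, Finset.sum_ite_eq, Finset.sum_ite_eq',
    Finset.mem_univ, if_true]

lemma A2_M31 (m n : ℕ) : A2 m n * M31 m n = M31 m n * calA2 m := by
  ext ⟨p, j⟩ l
  simp only [Matrix.mul_apply, Fintype.sum_prod_type, M31, M21, A2, calA2,
    Matrix.conjTranspose_apply, Matrix.of_apply, apply_ite (star : ℂ → ℂ), star_one,
    star_zero, ite_mul, mul_ite, one_mul, mul_one, zero_mul, mul_zero,
    Finset.sum_ite_irrel, Finset.sum_const_zero, Finset.sum_ite_eq, Finset.sum_ite_eq',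
    Finset.mem_univ, if_true]

lemma M22_A1H (m n : ℕ) : M22 m n * (A1 m n)ᴴ = (calA1 n)ᴴ * M22 m n := by
  ext p ⟨q, l⟩
  simp only [Matrix.mul_apply, Fintype.sum_prod_type, M22, A1, calA1,
    Matrix.conjTranspose_apply, Matrix.of_apply, apply_ite (star : ℂ → ℂ), star_one,
    star_zero, ite_mul, mul_ite, one_mul, mul_one, zero_mul, mul_zero,
    Finset.sum_ite_irrel, Finset.sum_const_zero, Finset.sum_ite_eq, Finset.sum_ite_eq',
    Finset.mem_univ, if_true]

lemma A1_M32 (m n : ℕ) : A1 m n * M32 m n = M32 m n * calA1 n := by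
  ext ⟨p, j⟩ q
  simp only [Matrix.mul_apply, Fintype.sum_prod_type, M32, M22, A1, calA1,
    Matrix.conjTranspose_apply, Matrix.of_apply, apply_ite (star : ℂ → ℂ), star_one,
    star_zero, ite_mul, mul_ite, one_mul, mul_one, zero_mul, mul_zero,
    Finset.sum_ite_irrel, Finset.sum_const_zero, Finset.sum_ite_eq, Finset.sum_ite_eq',
    Finset.mem_univ, if_true]

lemma ones_vecMul_M21 (m n : ℕ) : onesV (Fin m) ᵥ* M21 m n = onesV (Fin n × Fin m) := by
  funext ⟨q, l⟩
  simp [Matrix.vecMul, dotProduct, M21, onesV]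

lemma M31_mulVec_ones (m n : ℕ) : M31 m n *ᵥ onesV (Fin m) = onesV (Fin n × Fin m) := by
  funext ⟨q, l⟩
  simp [Matrix.mulVec, dotProduct, M31, M21, onesV,
    apply_ite (star : ℂ → ℂ)]

lemma ones_vecMul_M22 (m n : ℕ) : onesV (Fin n) ᵥ* M22 m n = onesV (Fin n × Fin m) := by
  funext ⟨q, l⟩
  simp [Matrix.vecMul, dotProduct, M22, onesV]

lemma M32_mulVec_ones (m n : ℕ) : M32 m n *ᵥ onesV (Fin n) = onesV (Fin n × Fin m) := by
  funext ⟨q, l⟩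
  simp [Matrix.mulVec, dotProduct, M32, M22, onesV,
    apply_ite (star : ℂ → ℂ)]

end Inter
section Vlem

lemma V1lem (m n : ℕ) (u2 : ℂ) (hW : IsUnit ((A2 m n)ᴴ - u2 • 1).det)
    (hw : IsUnit ((calA2 m)ᴴ - u2 • 1).det) :
    (onesV (Fin m) ᵥ* ((calA2 m)ᴴ - u2 • 1)⁻¹) ᵥ* M21 m n
      = onesV (Fin n × Fin m) ᵥ* ((A2 m n)ᴴ - u2 • 1)⁻¹ := by
  have key : M21 m n * ((A2 m n)ᴴ - u2 • 1) = ((calA2 m)ᴴ - u2 • 1) * M21 m n := by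
    rw [Matrix.mul_sub, Matrix.sub_mul, M21_A2H]
    congr 1
    rw [Matrix.mul_smul, Matrix.mul_one, Matrix.smul_mul, Matrix.one_mul]
  have h2 : ((onesV (Fin m) ᵥ* ((calA2 m)ᴴ - u2 • 1)⁻¹) ᵥ* M21 m n)
      ᵥ* ((A2 m n)ᴴ - u2 • 1) = onesV (Fin n × Fin m) := by
    rw [Matrix.vecMul_vecMul, Matrix.vecMul_vecMul, key,
      ← Matrix.mul_assoc, Matrix.nonsing_inv_mul _ hw, Matrix.one_mul, ones_vecMul_M21]
  have h3 := congrArg (fun v => v ᵥ* ((A2 m n)ᴴ - u2 • 1)⁻¹) h2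
  simpa [Matrix.vecMul_vecMul, Matrix.mul_assoc, Matrix.mul_nonsing_inv _ hW,
    Matrix.mul_one, Matrix.vecMul_one] using h3

lemma V2lem (m n : ℕ) (l2 : ℂ) (hZ : IsUnit ((A2 m n) - l2 • 1).det)
    (hz : IsUnit ((calA2 m) - l2 • 1).det) :
    M31 m n *ᵥ (((calA2 m) - l2 • 1)⁻¹ *ᵥ onesV (Fin m))
      = ((A2 m n) - l2 • 1)⁻¹ *ᵥ onesV (Fin n × Fin m) := by
  have key : ((A2 m n) - l2 • 1) * M31 m n = M31 m n * ((calA2 m) - l2 • 1) := by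
    rw [Matrix.mul_sub, Matrix.sub_mul, A2_M31]
    congr 1
    rw [Matrix.mul_smul, Matrix.mul_one, Matrix.smul_mul, Matrix.one_mul]
  have h2 : ((A2 m n) - l2 • 1) *ᵥ (M31 m n *ᵥ (((calA2 m) - l2 • 1)⁻¹ *ᵥ onesV (Fin m)))
      = onesV (Fin n × Fin m) := by
    rw [Matrix.mulVec_mulVec, Matrix.mulVec_mulVec, key, Matrix.mul_assoc,
      Matrix.mul_nonsing_inv _ hz, Matrix.mul_one, M31_mulVec_ones]
  have h3 := congrArg (fun v => ((A2 m n) - l2 • 1)⁻¹ *ᵥ v) h2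
  simpa [Matrix.mulVec_mulVec, ← Matrix.mul_assoc, Matrix.nonsing_inv_mul _ hZ,
    Matrix.one_mul, Matrix.one_mulVec] using h3

lemma V3lem (m n : ℕ) (u1 : ℂ) (hY : IsUnit ((A1 m n)ᴴ - u1 • 1).det)
    (hy : IsUnit ((calA1 n)ᴴ - u1 • 1).det) :
    (onesV (Fin n) ᵥ* ((calA1 n)ᴴ - u1 • 1)⁻¹) ᵥ* M22 m n
      = onesV (Fin n × Fin m) ᵥ* ((A1 m n)ᴴ - u1 • 1)⁻¹ := by
  have key : M22 m n * ((A1 m n)ᴴ - u1 • 1) = ((calA1 n)ᴴ - u1 • 1) * M22 m n := by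
    rw [Matrix.mul_sub, Matrix.sub_mul, M22_A1H]
    congr 1
    rw [Matrix.mul_smul, Matrix.mul_one, Matrix.smul_mul, Matrix.one_mul]
  have h2 : ((onesV (Fin n) ᵥ* ((calA1 n)ᴴ - u1 • 1)⁻¹) ᵥ* M22 m n)
      ᵥ* ((A1 m n)ᴴ - u1 • 1) = onesV (Fin n × Fin m) := by
    rw [Matrix.vecMul_vecMul, Matrix.vecMul_vecMul, key,
      ← Matrix.mul_assoc, Matrix.nonsing_inv_mul _ hy, Matrix.one_mul, ones_vecMul_M22]
  have h3 := congrArg (fun v => v ᵥ* ((A1 m n)ᴴ - u1 • 1)⁻¹) h2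
  simpa [Matrix.vecMul_vecMul, Matrix.mul_assoc, Matrix.mul_nonsing_inv _ hY,
    Matrix.mul_one, Matrix.vecMul_one] using h3

lemma V4lem (m n : ℕ) (l1 : ℂ) (hX : IsUnit ((A1 m n) - l1 • 1).det)
    (hx : IsUnit ((calA1 n) - l1 • 1).det) :
    M32 m n *ᵥ (((calA1 n) - l1 • 1)⁻¹ *ᵥ onesV (Fin n))
      = ((A1 m n) - l1 • 1)⁻¹ *ᵥ onesV (Fin n × Fin m) := by
  have key : ((A1 m n) - l1 • 1) * M32 m n = M32 m n * ((calA1 n) - l1 • 1) := by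
    rw [Matrix.mul_sub, Matrix.sub_mul, A1_M32]
    congr 1
    rw [Matrix.mul_smul, Matrix.mul_one, Matrix.smul_mul, Matrix.one_mul]
  have h2 : ((A1 m n) - l1 • 1) *ᵥ (M32 m n *ᵥ (((calA1 n) - l1 • 1)⁻¹ *ᵥ onesV (Fin n)))
      = onesV (Fin n × Fin m) := by
    rw [Matrix.mulVec_mulVec, Matrix.mulVec_mulVec, key, Matrix.mul_assoc,
      Matrix.mul_nonsing_inv _ hx, Matrix.mul_one, M32_mulVec_ones]
  have h3 := congrArg (fun v => ((A1 m n) - l1 • 1)⁻¹ *ᵥ v) h2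
  simpa [Matrix.mulVec_mulVec, ← Matrix.mul_assoc, Matrix.nonsing_inv_mul _ hX,
    Matrix.one_mul, Matrix.one_mulVec] using h3

end Vlem
section Main
open Kronecker

variable {m n : ℕ}

-- real statement:
lemma key_of_disp (m n : ℕ) (t : ℤ → ℤ → ℂ) (hT : IsUnit (TBT m n t).det)
    (A P : Matrix (Fin n × Fin m) (Fin n × Fin m) ℂ)
    (hD : A * TBT m n t - TBT m n t * Aᴴ = Complex.I • P) (l u : ℂ) :
    (l - u) • (TBT m n t)⁻¹
      = (Aᴴ - u • 1) * (TBT m n t)⁻¹ - (TBT m n t)⁻¹ * (A - l • 1)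
        + Complex.I • ((TBT m n t)⁻¹ * (P * (TBT m n t)⁻¹)) := by
  set T := TBT m n t with hTdef
  set R := T⁻¹ with hRdef
  have hR1 : T * R = 1 := Matrix.mul_nonsing_inv _ hT
  have hR2 : R * T = 1 := Matrix.nonsing_inv_mul _ hT
  have e1 : R * ((A * T - T * Aᴴ)) * R = R * A - Aᴴ * R := by
    rw [Matrix.mul_sub, Matrix.sub_mul]
    congr 1
    · rw [← Matrix.mul_assoc, Matrix.mul_assoc (R * A) T R, hR1, Matrix.mul_one]
    · rw [← Matrix.mul_assoc, hR2, Matrix.one_mul]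
  have e2 : R * (Complex.I • P) * R = Complex.I • (R * (P * R)) := by
    rw [Matrix.mul_smul, Matrix.smul_mul, Matrix.mul_assoc]
  have step : R * A - Aᴴ * R = Complex.I • (R * (P * R)) := by
    rw [← e1, ← e2, hD]
  -- goal
  have expand : (Aᴴ - u • 1) * R - R * (A - l • 1)
      = (Aᴴ * R - R * A) + (l - u) • R := by
    rw [Matrix.sub_mul, Matrix.mul_sub, Matrix.smul_mul, Matrix.mul_smul,
      Matrix.one_mul, Matrix.mul_one]
    module
  rw [expand]
  have : Aᴴ * R - R * A = - (Complex.I • (R * (P * R))) := by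
    rw [← step]; module
  rw [this]
  module

end Main

section MainIds
open Kronecker

lemma MAIN1 (m n : ℕ) (t : ℤ → ℤ → ℂ) (l1 l2 u1 u2 : ℂ)
    (hT : IsUnit (TBT m n t).det)
    (hX : IsUnit (A1 m n - l1 • 1).det) (hY : IsUnit ((A1 m n)ᴴ - u1 • 1).det)
    (hZ : IsUnit (A2 m n - l2 • 1).det) (hW : IsUnit ((A2 m n)ᴴ - u2 • 1).det) :
    (l1 - u1) • (((A1 m n)ᴴ - u1 • 1)⁻¹ * (((A2 m n)ᴴ - u2 • 1)⁻¹ * ((TBT m n t)⁻¹ *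
        ((A2 m n - l2 • 1)⁻¹ * (A1 m n - l1 • 1)⁻¹))))
      = ((A2 m n)ᴴ - u2 • 1)⁻¹ * ((TBT m n t)⁻¹ * ((A2 m n - l2 • 1)⁻¹ * (A1 m n - l1 • 1)⁻¹))
        - ((A1 m n)ᴴ - u1 • 1)⁻¹ * (((A2 m n)ᴴ - u2 • 1)⁻¹ * ((TBT m n t)⁻¹ * (A2 m n - l2 • 1)⁻¹))
        + Complex.I • (((A1 m n)ᴴ - u1 • 1)⁻¹ * (((A2 m n)ᴴ - u2 • 1)⁻¹ * ((TBT m n t)⁻¹ *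
            (Pi1 m n t * (PiHat1 m n t * ((TBT m n t)⁻¹ *
              ((A2 m n - l2 • 1)⁻¹ * (A1 m n - l1 • 1)⁻¹))))))) := by
  set X := A1 m n - l1 • 1 with hXd
  set Y := (A1 m n)ᴴ - u1 • 1 with hYd
  set Z := A2 m n - l2 • 1 with hZd
  set W := (A2 m n)ᴴ - u2 • 1 with hWd
  set R := (TBT m n t)⁻¹ with hRd
  have key := key_of_disp m n t hT (A1 m n) (Pi1 m n t * PiHat1 m n t) (disp1 m n t) l1 u1
  have comm1 : W⁻¹ * Y = Y * W⁻¹ := by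
    refine inv_comm_left ?_ hW
    rw [hWd, hYd, Y2_kron, Y1_kron, kron_comm]
  have comm2 : X * Z⁻¹ = Z⁻¹ * X := by
    refine (inv_comm_left ?_ hZ).symm
    rw [hZd, hXd, X2_kron, X1_kron, kron_comm]
  calc (l1 - u1) • (Y⁻¹ * (W⁻¹ * (R * (Z⁻¹ * X⁻¹))))
      = Y⁻¹ * (W⁻¹ * (((l1 - u1) • R) * (Z⁻¹ * X⁻¹))) := by
        simp only [Matrix.smul_mul, Matrix.mul_smul]
    _ = Y⁻¹ * (W⁻¹ * ((Y * R - R * X + Complex.I • (R * (Pi1 m n t * PiHat1 m n t * R)))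
          * (Z⁻¹ * X⁻¹))) := by rw [key]
    _ = Y⁻¹ * (W⁻¹ * (Y * (R * (Z⁻¹ * X⁻¹)))) - Y⁻¹ * (W⁻¹ * (R * (X * (Z⁻¹ * X⁻¹))))
          + Complex.I • (Y⁻¹ * (W⁻¹ * (R * (Pi1 m n t * (PiHat1 m n t * (R * (Z⁻¹ * X⁻¹))))))) := by
        simp only [Matrix.add_mul, Matrix.sub_mul, Matrix.mul_add, Matrix.mul_sub,
          Matrix.smul_mul, Matrix.mul_smul, Matrix.mul_assoc]
    _ = W⁻¹ * (R * (Z⁻¹ * X⁻¹)) - Y⁻¹ * (W⁻¹ * (R * Z⁻¹))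
          + Complex.I • (Y⁻¹ * (W⁻¹ * (R * (Pi1 m n t * (PiHat1 m n t * (R * (Z⁻¹ * X⁻¹))))))) := by
        congr 2
        · rw [← Matrix.mul_assoc W⁻¹ Y, comm1, Matrix.mul_assoc Y W⁻¹, ← Matrix.mul_assoc Y⁻¹ Y,
            Matrix.nonsing_inv_mul _ hY, Matrix.one_mul]
        · rw [← Matrix.mul_assoc X Z⁻¹, comm2, Matrix.mul_assoc Z⁻¹ X,
            Matrix.mul_nonsing_inv _ hX, Matrix.mul_one]

lemma MAIN2 (m n : ℕ) (t : ℤ → ℤ → ℂ) (l1 l2 u1 u2 : ℂ)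
    (hT : IsUnit (TBT m n t).det)
    (hX : IsUnit (A1 m n - l1 • 1).det) (hY : IsUnit ((A1 m n)ᴴ - u1 • 1).det)
    (hZ : IsUnit (A2 m n - l2 • 1).det) (hW : IsUnit ((A2 m n)ᴴ - u2 • 1).det) :
    (l2 - u2) • (((A1 m n)ᴴ - u1 • 1)⁻¹ * (((A2 m n)ᴴ - u2 • 1)⁻¹ * ((TBT m n t)⁻¹ *
        ((A2 m n - l2 • 1)⁻¹ * (A1 m n - l1 • 1)⁻¹))))
      = ((A1 m n)ᴴ - u1 • 1)⁻¹ * ((TBT m n t)⁻¹ * ((A2 m n - l2 • 1)⁻¹ * (A1 m n - l1 • 1)⁻¹))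
        - ((A1 m n)ᴴ - u1 • 1)⁻¹ * (((A2 m n)ᴴ - u2 • 1)⁻¹ * ((TBT m n t)⁻¹ * (A1 m n - l1 • 1)⁻¹))
        + Complex.I • (((A1 m n)ᴴ - u1 • 1)⁻¹ * (((A2 m n)ᴴ - u2 • 1)⁻¹ * ((TBT m n t)⁻¹ *
            (Pi2 m n t * (PiHat2 m n t * ((TBT m n t)⁻¹ *
              ((A2 m n - l2 • 1)⁻¹ * (A1 m n - l1 • 1)⁻¹))))))) := by
  set X := A1 m n - l1 • 1 with hXd
  set Y := (A1 m n)ᴴ - u1 • 1 with hYd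
  set Z := A2 m n - l2 • 1 with hZd
  set W := (A2 m n)ᴴ - u2 • 1 with hWd
  set R := (TBT m n t)⁻¹ with hRd
  have key := key_of_disp m n t hT (A2 m n) (Pi2 m n t * PiHat2 m n t) (disp2 m n t) l2 u2
  calc (l2 - u2) • (Y⁻¹ * (W⁻¹ * (R * (Z⁻¹ * X⁻¹))))
      = Y⁻¹ * (W⁻¹ * (((l2 - u2) • R) * (Z⁻¹ * X⁻¹))) := by
        simp only [Matrix.smul_mul, Matrix.mul_smul]
    _ = Y⁻¹ * (W⁻¹ * ((W * R - R * Z + Complex.I • (R * (Pi2 m n t * PiHat2 m n t * R)))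
          * (Z⁻¹ * X⁻¹))) := by rw [key]
    _ = Y⁻¹ * (W⁻¹ * (W * (R * (Z⁻¹ * X⁻¹)))) - Y⁻¹ * (W⁻¹ * (R * (Z * (Z⁻¹ * X⁻¹))))
          + Complex.I • (Y⁻¹ * (W⁻¹ * (R * (Pi2 m n t * (PiHat2 m n t * (R * (Z⁻¹ * X⁻¹))))))) := by
        simp only [Matrix.add_mul, Matrix.sub_mul, Matrix.mul_add, Matrix.mul_sub,
          Matrix.smul_mul, Matrix.mul_smul, Matrix.mul_assoc]
    _ = Y⁻¹ * (R * (Z⁻¹ * X⁻¹)) - Y⁻¹ * (W⁻¹ * (R * X⁻¹))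
          + Complex.I • (Y⁻¹ * (W⁻¹ * (R * (Pi2 m n t * (PiHat2 m n t * (R * (Z⁻¹ * X⁻¹))))))) := by
        congr 2
        · rw [← Matrix.mul_assoc W⁻¹ W, Matrix.nonsing_inv_mul _ hW, Matrix.one_mul]
        · rw [← Matrix.mul_assoc Z Z⁻¹, Matrix.mul_nonsing_inv _ hZ, Matrix.one_mul]

end MainIds
section Assemble

lemma elim_add_smul {α β : Type*} (f g : α → ℂ) (f' g' : β → ℂ) (c : ℂ) :
    Sum.elim f f' + c • Sum.elim g g' = Sum.elim (f + c • g) (f' + c • g') := by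
  funext i
  cases i <;> simp

lemma elim_sub_smul {α β : Type*} (f g : α → ℂ) (f' g' : β → ℂ) (c : ℂ) :
    Sum.elim f f' - c • Sum.elim g g' = Sum.elim (f - c • g) (f' - c • g') := by
  funext i
  cases i <;> simp

lemma P1_mulVec (m n : ℕ) (v : (Fin m ⊕ Fin m) → ℂ) (w : (Fin n ⊕ Fin n) → ℂ) :
    P1M m n *ᵥ Sum.elim v w = Sum.elim v 0 := by
  funext i
  cases i <;>
    simp [P1M, Matrix.fromBlocks_mulVec, Matrix.one_mulVec, Matrix.zero_mulVec]

lemma P2_mulVec (m n : ℕ) (v : (Fin m ⊕ Fin m) → ℂ) (w : (Fin n ⊕ Fin n) → ℂ) :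
    P2M m n *ᵥ Sum.elim v w = Sum.elim (0 : (Fin m ⊕ Fin m) → ℂ) w := by
  funext i
  have h1 := congrFun (P1_mulVec m n v w) i
  cases i <;>
    simp_all [P2M, Matrix.sub_mulVec, Matrix.one_mulVec]

lemma vm_dot_mv {α β γ : Type*} [Fintype α] [Fintype β] [Fintype γ]
    (v : α → ℂ) (A : Matrix α β ℂ) (B : Matrix β γ ℂ) (w : γ → ℂ) :
    (v ᵥ* A) ⬝ᵥ (B *ᵥ w) = v ⬝ᵥ ((A * B) *ᵥ w) := by
  rw [Matrix.dotProduct_mulVec, Matrix.vecMul_vecMul, ← Matrix.dotProduct_mulVec]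

end Assemble
section UPU

lemma uPu1 (m n : ℕ) (t : ℤ → ℤ → ℂ) (l1 l2 u1 u2 : ℂ)
    (hZ : IsUnit (A2 m n - l2 • 1).det) (hW : IsUnit ((A2 m n)ᴴ - u2 • 1).det)
    (hz : IsUnit (calA2 m - l2 • 1).det) (hw : IsUnit ((calA2 m)ᴴ - u2 • 1).det) :
    uRow m n t u1 u2 ⬝ᵥ (P1M m n *ᵥ uHatCol m n t l1 l2)
      = onesV (Fin n × Fin m) ⬝ᵥ
          ((((A1 m n)ᴴ - u1 • 1)⁻¹ * (((A2 m n)ᴴ - u2 • 1)⁻¹ * ((TBT m n t)⁻¹ *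
            (Pi1 m n t * (PiHat1 m n t * ((TBT m n t)⁻¹ *
              ((A2 m n - l2 • 1)⁻¹ * (A1 m n - l1 • 1)⁻¹))))))) *ᵥ onesV (Fin n × Fin m))
        + Complex.I * (onesV (Fin n × Fin m) ⬝ᵥ
            ((((A1 m n)ᴴ - u1 • 1)⁻¹ * (((A2 m n)ᴴ - u2 • 1)⁻¹ * ((TBT m n t)⁻¹ *
              (A2 m n - l2 • 1)⁻¹))) *ᵥ onesV (Fin n × Fin m)))
        - Complex.I * (onesV (Fin n × Fin m) ⬝ᵥ
            ((((A2 m n)ᴴ - u2 • 1)⁻¹ * ((TBT m n t)⁻¹ *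
              ((A2 m n - l2 • 1)⁻¹ * (A1 m n - l1 • 1)⁻¹))) *ᵥ onesV (Fin n × Fin m))) := by
  have hrow : uRow m n t u1 u2
      = Sum.elim
          (onesV (Fin n × Fin m) ᵥ*
              (((A1 m n)ᴴ - u1 • 1)⁻¹ * ((A2 m n)ᴴ - u2 • 1)⁻¹ * Gam1 m n t)
            - Complex.I • Sum.elim (onesV (Fin m) ᵥ* ((calA2 m)ᴴ - u2 • 1)⁻¹) 0)
          (onesV (Fin n × Fin m) ᵥ*
              (((A1 m n)ᴴ - u1 • 1)⁻¹ * ((A2 m n)ᴴ - u2 • 1)⁻¹ * Gam2 m n t)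
            - Complex.I • Sum.elim (onesV (Fin n) ᵥ* ((calA1 n)ᴴ - u1 • 1)⁻¹) 0) := by
    rw [uRow, GammaFull, Matrix.mul_fromCols, Matrix.vecMul_fromCols, star_onesV,
      star_onesV, star_onesV, elim_sub_smul]
  have hcol : uHatCol m n t l1 l2
      = Sum.elim
          ((GamHat1 m n t * (A2 m n - l2 • 1)⁻¹ * (A1 m n - l1 • 1)⁻¹) *ᵥ onesV (Fin n × Fin m)
            + Complex.I • Sum.elim (0 : Fin m → ℂ) ((calA2 m - l2 • 1)⁻¹ *ᵥ onesV (Fin m)))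
          ((GamHat2 m n t * (A2 m n - l2 • 1)⁻¹ * (A1 m n - l1 • 1)⁻¹) *ᵥ onesV (Fin n × Fin m)
            + Complex.I • Sum.elim (0 : Fin n → ℂ) ((calA1 n - l1 • 1)⁻¹ *ᵥ onesV (Fin n))) := by
    rw [uHatCol, GammaHatFull, Matrix.fromRows_mul, Matrix.fromRows_mul,
      Matrix.fromRows_mulVec, elim_add_smul]
  rw [hrow, hcol, P1_mulVec, sumElim_dotProduct_sumElim, dotProduct_zero,
    add_zero]
  simp only [sub_dotProduct, dotProduct_add, smul_dotProduct,
    dotProduct_smul]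
  -- Term 1 : main term
  have hT1 : (onesV (Fin n × Fin m) ᵥ*
        (((A1 m n)ᴴ - u1 • 1)⁻¹ * ((A2 m n)ᴴ - u2 • 1)⁻¹ * Gam1 m n t)) ⬝ᵥ
        ((GamHat1 m n t * (A2 m n - l2 • 1)⁻¹ * (A1 m n - l1 • 1)⁻¹) *ᵥ onesV (Fin n × Fin m))
      = onesV (Fin n × Fin m) ⬝ᵥ
          ((((A1 m n)ᴴ - u1 • 1)⁻¹ * (((A2 m n)ᴴ - u2 • 1)⁻¹ * ((TBT m n t)⁻¹ *
            (Pi1 m n t * (PiHat1 m n t * ((TBT m n t)⁻¹ *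
              ((A2 m n - l2 • 1)⁻¹ * (A1 m n - l1 • 1)⁻¹))))))) *ᵥ onesV (Fin n × Fin m)) := by
    rw [vm_dot_mv, Gam1, GamHat1]
    simp only [Matrix.mul_assoc]
  -- Term 2 : the d-term
  have hT2 : (onesV (Fin n × Fin m) ᵥ*
        (((A1 m n)ᴴ - u1 • 1)⁻¹ * ((A2 m n)ᴴ - u2 • 1)⁻¹ * Gam1 m n t)) ⬝ᵥ
        Sum.elim (0 : Fin m → ℂ) ((calA2 m - l2 • 1)⁻¹ *ᵥ onesV (Fin m))
      = onesV (Fin n × Fin m) ⬝ᵥ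
          ((((A1 m n)ᴴ - u1 • 1)⁻¹ * (((A2 m n)ᴴ - u2 • 1)⁻¹ * ((TBT m n t)⁻¹ *
            (A2 m n - l2 • 1)⁻¹))) *ᵥ onesV (Fin n × Fin m)) := by
    have e2 : ((A1 m n)ᴴ - u1 • 1)⁻¹ * ((A2 m n)ᴴ - u2 • 1)⁻¹ * Gam1 m n t
        = Matrix.fromCols
            (((A1 m n)ᴴ - u1 • 1)⁻¹ * ((A2 m n)ᴴ - u2 • 1)⁻¹ * ((TBT m n t)⁻¹ * M11 m n t))
            (((A1 m n)ᴴ - u1 • 1)⁻¹ * ((A2 m n)ᴴ - u2 • 1)⁻¹ * ((TBT m n t)⁻¹ * M31 m n)) := by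
      rw [Gam1, Pi1, Matrix.mul_fromCols, Matrix.mul_fromCols]
    rw [e2, Matrix.vecMul_fromCols, sumElim_dotProduct_sumElim,
      dotProduct_zero, zero_add, ← Matrix.dotProduct_mulVec]
    simp only [← Matrix.mulVec_mulVec]
    rw [V2lem m n l2 hZ hz]
  -- Term 3 : the c-term
  have hT3 : Sum.elim (onesV (Fin m) ᵥ* ((calA2 m)ᴴ - u2 • 1)⁻¹) 0 ⬝ᵥ
        ((GamHat1 m n t * (A2 m n - l2 • 1)⁻¹ * (A1 m n - l1 • 1)⁻¹) *ᵥ onesV (Fin n × Fin m))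
      = onesV (Fin n × Fin m) ⬝ᵥ
          ((((A2 m n)ᴴ - u2 • 1)⁻¹ * ((TBT m n t)⁻¹ *
            ((A2 m n - l2 • 1)⁻¹ * (A1 m n - l1 • 1)⁻¹))) *ᵥ onesV (Fin n × Fin m)) := by
    have e3 : GamHat1 m n t * (A2 m n - l2 • 1)⁻¹ * (A1 m n - l1 • 1)⁻¹
        = Matrix.fromRows
            (M21 m n * ((TBT m n t)⁻¹ * ((A2 m n - l2 • 1)⁻¹ * (A1 m n - l1 • 1)⁻¹)))
            (M41 m n t * ((TBT m n t)⁻¹ * ((A2 m n - l2 • 1)⁻¹ * (A1 m n - l1 • 1)⁻¹))) := by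
      rw [GamHat1, PiHat1, Matrix.fromRows_mul, Matrix.fromRows_mul, Matrix.fromRows_mul]
      simp only [Matrix.mul_assoc]
    rw [e3, Matrix.fromRows_mulVec, sumElim_dotProduct_sumElim,
      zero_dotProduct, add_zero]
    rw [← Matrix.mulVec_mulVec, Matrix.dotProduct_mulVec, V1lem m n u2 hW hw, vm_dot_mv]
  -- Term 4 : zero
  rw [hT1, hT2, hT3]
  simp only [sumElim_dotProduct_sumElim, dotProduct_zero,
    zero_dotProduct, add_zero, smul_eq_mul]
  ring
end UPU
section UPU2

lemma uPu2 (m n : ℕ) (t : ℤ → ℤ → ℂ) (l1 l2 u1 u2 : ℂ)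
    (hX : IsUnit (A1 m n - l1 • 1).det) (hY : IsUnit ((A1 m n)ᴴ - u1 • 1).det)
    (hx : IsUnit (calA1 n - l1 • 1).det) (hy : IsUnit ((calA1 n)ᴴ - u1 • 1).det) :
    uRow m n t u1 u2 ⬝ᵥ (P2M m n *ᵥ uHatCol m n t l1 l2)
      = onesV (Fin n × Fin m) ⬝ᵥ
          ((((A1 m n)ᴴ - u1 • 1)⁻¹ * (((A2 m n)ᴴ - u2 • 1)⁻¹ * ((TBT m n t)⁻¹ *
            (Pi2 m n t * (PiHat2 m n t * ((TBT m n t)⁻¹ *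
              ((A2 m n - l2 • 1)⁻¹ * (A1 m n - l1 • 1)⁻¹))))))) *ᵥ onesV (Fin n × Fin m))
        + Complex.I * (onesV (Fin n × Fin m) ⬝ᵥ
            ((((A1 m n)ᴴ - u1 • 1)⁻¹ * (((A2 m n)ᴴ - u2 • 1)⁻¹ * ((TBT m n t)⁻¹ *
              (A1 m n - l1 • 1)⁻¹))) *ᵥ onesV (Fin n × Fin m)))
        - Complex.I * (onesV (Fin n × Fin m) ⬝ᵥ
            ((((A1 m n)ᴴ - u1 • 1)⁻¹ * ((TBT m n t)⁻¹ *
              ((A2 m n - l2 • 1)⁻¹ * (A1 m n - l1 • 1)⁻¹))) *ᵥ onesV (Fin n × Fin m))) := by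
  have hrow : uRow m n t u1 u2
      = Sum.elim
          (onesV (Fin n × Fin m) ᵥ*
              (((A1 m n)ᴴ - u1 • 1)⁻¹ * ((A2 m n)ᴴ - u2 • 1)⁻¹ * Gam1 m n t)
            - Complex.I • Sum.elim (onesV (Fin m) ᵥ* ((calA2 m)ᴴ - u2 • 1)⁻¹) 0)
          (onesV (Fin n × Fin m) ᵥ*
              (((A1 m n)ᴴ - u1 • 1)⁻¹ * ((A2 m n)ᴴ - u2 • 1)⁻¹ * Gam2 m n t)
            - Complex.I • Sum.elim (onesV (Fin n) ᵥ* ((calA1 n)ᴴ - u1 • 1)⁻¹) 0) := by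
    rw [uRow, GammaFull, Matrix.mul_fromCols, Matrix.vecMul_fromCols, star_onesV,
      star_onesV, star_onesV, elim_sub_smul]
  have hcol : uHatCol m n t l1 l2
      = Sum.elim
          ((GamHat1 m n t * (A2 m n - l2 • 1)⁻¹ * (A1 m n - l1 • 1)⁻¹) *ᵥ onesV (Fin n × Fin m)
            + Complex.I • Sum.elim (0 : Fin m → ℂ) ((calA2 m - l2 • 1)⁻¹ *ᵥ onesV (Fin m)))
          ((GamHat2 m n t * (A2 m n - l2 • 1)⁻¹ * (A1 m n - l1 • 1)⁻¹) *ᵥ onesV (Fin n × Fin m)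
            + Complex.I • Sum.elim (0 : Fin n → ℂ) ((calA1 n - l1 • 1)⁻¹ *ᵥ onesV (Fin n))) := by
    rw [uHatCol, GammaHatFull, Matrix.fromRows_mul, Matrix.fromRows_mul,
      Matrix.fromRows_mulVec, elim_add_smul]
  rw [hrow, hcol, P2_mulVec, sumElim_dotProduct_sumElim, dotProduct_zero,
    zero_add]
  simp only [sub_dotProduct, dotProduct_add, smul_dotProduct,
    dotProduct_smul]
  have hT1 : (onesV (Fin n × Fin m) ᵥ*
        (((A1 m n)ᴴ - u1 • 1)⁻¹ * ((A2 m n)ᴴ - u2 • 1)⁻¹ * Gam2 m n t)) ⬝ᵥ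
        ((GamHat2 m n t * (A2 m n - l2 • 1)⁻¹ * (A1 m n - l1 • 1)⁻¹) *ᵥ onesV (Fin n × Fin m))
      = onesV (Fin n × Fin m) ⬝ᵥ
          ((((A1 m n)ᴴ - u1 • 1)⁻¹ * (((A2 m n)ᴴ - u2 • 1)⁻¹ * ((TBT m n t)⁻¹ *
            (Pi2 m n t * (PiHat2 m n t * ((TBT m n t)⁻¹ *
              ((A2 m n - l2 • 1)⁻¹ * (A1 m n - l1 • 1)⁻¹))))))) *ᵥ onesV (Fin n × Fin m)) := by
    rw [vm_dot_mv, Gam2, GamHat2]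
    simp only [Matrix.mul_assoc]
  have hT2 : (onesV (Fin n × Fin m) ᵥ*
        (((A1 m n)ᴴ - u1 • 1)⁻¹ * ((A2 m n)ᴴ - u2 • 1)⁻¹ * Gam2 m n t)) ⬝ᵥ
        Sum.elim (0 : Fin n → ℂ) ((calA1 n - l1 • 1)⁻¹ *ᵥ onesV (Fin n))
      = onesV (Fin n × Fin m) ⬝ᵥ
          ((((A1 m n)ᴴ - u1 • 1)⁻¹ * (((A2 m n)ᴴ - u2 • 1)⁻¹ * ((TBT m n t)⁻¹ *
            (A1 m n - l1 • 1)⁻¹))) *ᵥ onesV (Fin n × Fin m)) := by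
    have e2 : ((A1 m n)ᴴ - u1 • 1)⁻¹ * ((A2 m n)ᴴ - u2 • 1)⁻¹ * Gam2 m n t
        = Matrix.fromCols
            (((A1 m n)ᴴ - u1 • 1)⁻¹ * ((A2 m n)ᴴ - u2 • 1)⁻¹ * ((TBT m n t)⁻¹ * M12 m n t))
            (((A1 m n)ᴴ - u1 • 1)⁻¹ * ((A2 m n)ᴴ - u2 • 1)⁻¹ * ((TBT m n t)⁻¹ * M32 m n)) := by
      rw [Gam2, Pi2, Matrix.mul_fromCols, Matrix.mul_fromCols]
    rw [e2, Matrix.vecMul_fromCols, sumElim_dotProduct_sumElim,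
      dotProduct_zero, zero_add, ← Matrix.dotProduct_mulVec]
    simp only [← Matrix.mulVec_mulVec]
    rw [V4lem m n l1 hX hx]
  have hT3 : Sum.elim (onesV (Fin n) ᵥ* ((calA1 n)ᴴ - u1 • 1)⁻¹) 0 ⬝ᵥ
        ((GamHat2 m n t * (A2 m n - l2 • 1)⁻¹ * (A1 m n - l1 • 1)⁻¹) *ᵥ onesV (Fin n × Fin m))
      = onesV (Fin n × Fin m) ⬝ᵥ
          ((((A1 m n)ᴴ - u1 • 1)⁻¹ * ((TBT m n t)⁻¹ *
            ((A2 m n - l2 • 1)⁻¹ * (A1 m n - l1 • 1)⁻¹))) *ᵥ onesV (Fin n × Fin m)) := by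
    have e3 : GamHat2 m n t * (A2 m n - l2 • 1)⁻¹ * (A1 m n - l1 • 1)⁻¹
        = Matrix.fromRows
            (M22 m n * ((TBT m n t)⁻¹ * ((A2 m n - l2 • 1)⁻¹ * (A1 m n - l1 • 1)⁻¹)))
            (M42 m n t * ((TBT m n t)⁻¹ * ((A2 m n - l2 • 1)⁻¹ * (A1 m n - l1 • 1)⁻¹))) := by
      rw [GamHat2, PiHat2, Matrix.fromRows_mul, Matrix.fromRows_mul, Matrix.fromRows_mul]
      simp only [Matrix.mul_assoc]
    rw [e3, Matrix.fromRows_mulVec, sumElim_dotProduct_sumElim,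
      zero_dotProduct, add_zero]
    rw [← Matrix.mulVec_mulVec, Matrix.dotProduct_mulVec, V3lem m n u1 hY hy, vm_dot_mv]
  rw [hT1, hT2, hT3]
  simp only [sumElim_dotProduct_sumElim, dotProduct_zero,
    zero_dotProduct, add_zero, smul_eq_mul]
  ring

end UPU2
lemma scalar_final (ov s2 s3 t11 L : ℂ) (hL : L ≠ 0)
    (happ : L * ov = s3 - s2 + Complex.I * t11) :
    ov = Complex.I * L⁻¹ * (t11 + Complex.I * s2 - Complex.I * s3) := by
  have hI := Complex.I_mul_I
  field_simp
  linear_combination happ + (s3 - s2) * hI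

/-- Proposition 2.1: `ω(λ,μ) = i(λ_p − μ_p)^{-1} u(μ) P_p û(λ)` for `p = 1, 2`. -/
theorem omega_simple_representations (m n : ℕ) (hm : 0 < m) (hn : 0 < n) (t : ℤ → ℤ → ℂ)
    (hT : IsUnit (TBT m n t)) (l1 l2 u1 u2 : ℂ)
    (hl1 : l1 ≠ Complex.I / 2) (hl2 : l2 ≠ Complex.I / 2)
    (hu1 : u1 ≠ -(Complex.I / 2)) (hu2 : u2 ≠ -(Complex.I / 2)) :
    (l1 ≠ u1 →
      omegaF m n t l1 l2 u1 u2
        = Complex.I * (l1 - u1)⁻¹ *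
            (uRow m n t u1 u2 ⬝ᵥ (P1M m n *ᵥ uHatCol m n t l1 l2))) ∧
    (l2 ≠ u2 →
      omegaF m n t l1 l2 u1 u2
        = Complex.I * (l2 - u2)⁻¹ *
            (uRow m n t u1 u2 ⬝ᵥ (P2M m n *ᵥ uHatCol m n t l1 l2))) := by
  have hTd : IsUnit (TBT m n t).det := (Matrix.isUnit_iff_isUnit_det _).1 hT
  have hx : IsUnit (calA1 n - l1 • 1).det := isUnit_det_calA_sub n hl1
  have hz : IsUnit (calA2 m - l2 • 1).det := by
    rw [calA2_eq]; exact isUnit_det_calA_sub m hl2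
  have hy : IsUnit ((calA1 n)ᴴ - u1 • 1).det := isUnit_det_calA_conj_sub n hu1
  have hw : IsUnit ((calA2 m)ᴴ - u2 • 1).det := by
    rw [calA2_eq]; exact isUnit_det_calA_conj_sub m hu2
  have hX : IsUnit (A1 m n - l1 • 1).det := by
    rw [X1_kron, det_kron_left]; exact hx.pow m
  have hY : IsUnit ((A1 m n)ᴴ - u1 • 1).det := by
    rw [Y1_kron, det_kron_left]; exact hy.pow m
  have hZ : IsUnit (A2 m n - l2 • 1).det := by
    rw [X2_kron, det_kron_right]; exact hz.pow n
  have hW : IsUnit ((A2 m n)ᴴ - u2 • 1).det := by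
    rw [Y2_kron, det_kron_right]; exact hw.pow n
  have homega : omegaF m n t l1 l2 u1 u2
      = onesV (Fin n × Fin m) ⬝ᵥ
          ((((A1 m n)ᴴ - u1 • 1)⁻¹ * (((A2 m n)ᴴ - u2 • 1)⁻¹ * ((TBT m n t)⁻¹ *
            ((A2 m n - l2 • 1)⁻¹ * (A1 m n - l1 • 1)⁻¹)))) *ᵥ onesV (Fin n × Fin m)) := by
    rw [omegaF, star_onesV]
    simp only [Matrix.mul_assoc]
  constructor
  · intro hne
    have hne' : l1 - u1 ≠ 0 := sub_ne_zero.2 hne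
    have main := MAIN1 m n t l1 l2 u1 u2 hTd hX hY hZ hW
    have happ := congrArg
      (fun M => onesV (Fin n × Fin m) ⬝ᵥ (M *ᵥ onesV (Fin n × Fin m))) main
    simp only [Matrix.smul_mulVec, Matrix.sub_mulVec, Matrix.add_mulVec,
      dotProduct_sub, dotProduct_add, dotProduct_smul,
      smul_eq_mul] at happ
    rw [homega, uPu1 m n t l1 l2 u1 u2 hZ hW hz hw]
    exact scalar_final _ _ _ _ _ hne' happ
  · intro hne
    have hne' : l2 - u2 ≠ 0 := sub_ne_zero.2 hne
    have main := MAIN2 m n t l1 l2 u1 u2 hTd hX hY hZ hW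
    have happ := congrArg
      (fun M => onesV (Fin n × Fin m) ⬝ᵥ (M *ᵥ onesV (Fin n × Fin m))) main
    simp only [Matrix.smul_mulVec, Matrix.sub_mulVec, Matrix.add_mulVec,
      dotProduct_sub, dotProduct_add, dotProduct_smul,
      smul_eq_mul] at happ
    rw [homega, uPu2 m n t l1 l2 u1 u2 hX hY hx hy]
    exact scalar_final _ _ _ _ _ hne' happ

end
end

section
/- Assume the TBT matrix T is invertible. Then g_{21} = −U_{2n} J_{2n} g_{12}^τ J_{2m} U_{2m}, where ^τ denotes the transpose (without conjugation). -/
open Matrix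

noncomputable section

namespace TBTAux

open Finset

/-! ### flip matrices as indicator matrices -/

lemma flipU_apply₁ (k : ℕ) (p q : Fin k) :
    flipU k p q = if q = p.rev then 1 else 0 := by
  have hp := p.is_lt; have hq := q.is_lt
  have : ((p : ℕ) + (q : ℕ) + 1 = k) ↔ (q = p.rev) := by
    rw [Fin.ext_iff, Fin.val_rev]; omega
  simp [flipU, this]

lemma flipU_apply₂ (k : ℕ) (p q : Fin k) :
    flipU k p q = if p = q.rev then 1 else 0 := by
  have hp := p.is_lt; have hq := q.is_lt
  have : ((p : ℕ) + (q : ℕ) + 1 = k) ↔ (p = q.rev) := by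
    rw [Fin.ext_iff, Fin.val_rev]; omega
  simp [flipU, this]

lemma key_nat (m n P Q J L : ℕ) (hP : P < n) (hQ : Q < n) (hJ : J < m) (hL : L < m) :
    m * P + J + (m * Q + L) + 1 = m * n ↔ (Q = n - (P + 1) ∧ L = m - (J + 1)) := by
  constructor
  · intro h
    obtain ⟨d, hd⟩ : ∃ d, n = P + Q + d := by
      refine ⟨n - (P + Q), ?_⟩
      have h1 : m * (P + Q) < m * n := by
        have : m * (P + Q) = m * P + m * Q := by ring
        omega
      have := Nat.lt_of_mul_lt_mul_left h1
      omega
    subst hd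
    have e : m * (P + Q + d) = m * P + m * Q + m * d := by ring
    have hmd : J + L + 1 = m * d := by omega
    rcases d with _ | _ | d
    · rw [Nat.mul_zero] at hmd; omega
    · rw [Nat.mul_one] at hmd; omega
    · exfalso
      have h2 : 2 * m ≤ m * (d + 1 + 1) := by nlinarith
      rw [← hmd] at h2
      omega
  · rintro ⟨h1, h2⟩
    have hn : n = P + Q + 1 := by omega
    subst hn
    have e : m * (P + Q + 1) = m * P + m * Q + m := by ring
    omega

lemma UmnM_apply₁ (m n : ℕ) (r c : Fin n × Fin m) :
    UmnM m n r c = if c = (r.1.rev, r.2.rev) then 1 else 0 := by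
  obtain ⟨p, j⟩ := r; obtain ⟨q, l⟩ := c
  have hp := p.is_lt; have hq := q.is_lt; have hj := j.is_lt; have hl := l.is_lt
  have key : (m * (p : ℕ) + (j : ℕ) + (m * (q : ℕ) + (l : ℕ)) + 1 = m * n) ↔
      ((q, l) = (p.rev, j.rev)) := by
    rw [Prod.ext_iff, Fin.ext_iff, Fin.ext_iff, Fin.val_rev, Fin.val_rev]
    exact key_nat m n p q j l hp hq hj hl
  simp [UmnM, key]

/-! ### multiplication by flips -/

lemma mul_flipU_apply {α : Type*} [Fintype α] {k : ℕ} (A : Matrix α (Fin k) ℂ)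
    (r : α) (q : Fin k) : (A * flipU k) r q = A r q.rev := by
  simp [Matrix.mul_apply, flipU_apply₂, mul_ite]

lemma flipU_mul_apply {α : Type*} {k : ℕ} (A : Matrix (Fin k) α ℂ)
    (p : Fin k) (c : α) : (flipU k * A) p c = A p.rev c := by
  simp [Matrix.mul_apply, flipU_apply₁, ite_mul]

lemma mul_UmnM_apply {α : Type*} [Fintype α] {m n : ℕ}
    (A : Matrix α (Fin n × Fin m) ℂ) (r : α) (c : Fin n × Fin m) :
    (A * UmnM m n) r c = A r (c.1.rev, c.2.rev) := by
  have key : ∀ b : Fin n × Fin m, UmnM m n b c = if b = (c.1.rev, c.2.rev) then 1 else 0 := by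
    intro b
    rw [UmnM_apply₁]
    congr 1
    exact propext ⟨fun h => by subst h; simp [Prod.ext_iff, Fin.rev_rev],
      fun h => by subst h; simp [Prod.ext_iff, Fin.rev_rev]⟩
  simp [Matrix.mul_apply, key, mul_ite]

lemma UmnM_mul_apply {α : Type*} {m n : ℕ}
    (A : Matrix (Fin n × Fin m) α ℂ) (r : Fin n × Fin m) (c : α) :
    (UmnM m n * A) r c = A (r.1.rev, r.2.rev) c := by
  simp [Matrix.mul_apply, UmnM_apply₁, ite_mul]

end TBTAux
namespace TBTAux

open Finset

lemma rev_sub_rev {k : ℕ} (a b : Fin k) :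
    ((a.rev : ℕ) : ℤ) - ((b.rev : ℕ) : ℤ) = ((b : ℕ) : ℤ) - ((a : ℕ) : ℤ) := by
  have ha := a.is_lt; have hb := b.is_lt
  rw [Fin.val_rev, Fin.val_rev]
  omega

lemma sum_shift {k : ℕ} (f : ℤ → ℂ) (c : Fin k) :
    ∑ j : Fin k, f (((j : ℕ) : ℤ) - ((c : ℕ) : ℤ)) =
      f 0 + (∑ s ∈ Finset.range ((c.rev : ℕ)), f ((s : ℤ) + 1))
        + ∑ s ∈ Finset.range ((c : ℕ)), f (-((s : ℤ) + 1)) := by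
  have hc := c.is_lt
  rw [Fin.sum_univ_eq_sum_range (fun j => f ((j : ℤ) - ((c : ℕ) : ℤ)))]
  rw [Finset.range_eq_Ico,
    ← Finset.sum_Ico_consecutive (fun j : ℕ => f ((j : ℤ) - ((c : ℕ) : ℤ)))
      (Nat.zero_le ((c : ℕ) + 1)) (by omega : (c : ℕ) + 1 ≤ k)]
  rw [← Finset.range_eq_Ico, Finset.sum_range_succ]
  have h1 : ∑ j ∈ Finset.range (c : ℕ), f ((j : ℤ) - ((c : ℕ) : ℤ))
      = ∑ s ∈ Finset.range ((c : ℕ)), f (-((s : ℤ) + 1)) := by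
    rw [← Finset.sum_range_reflect (fun j : ℕ => f ((j : ℤ) - ((c : ℕ) : ℤ))) (c : ℕ)]
    refine Finset.sum_congr rfl fun j hj => ?_
    have hjc := Finset.mem_range.mp hj
    congr 1
    omega
  have h2 : ∑ j ∈ Finset.Ico ((c : ℕ) + 1) k, f ((j : ℤ) - ((c : ℕ) : ℤ))
      = ∑ s ∈ Finset.range ((c.rev : ℕ)), f ((s : ℤ) + 1) := by
    rw [Finset.sum_Ico_eq_sum_range]
    rw [Fin.val_rev]
    refine Finset.sum_congr (by first | rfl | (congr 1; omega)) fun j hj => ?_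
    congr 1
    push_cast
    ring
  rw [h1, h2]
  have h3 : (((c : ℕ) : ℤ) - ((c : ℕ) : ℤ)) = 0 := by ring
  rw [h3]
  ring

lemma sum_shift' {k : ℕ} (f : ℤ → ℂ) (p : Fin k) :
    ∑ q : Fin k, f (((p : ℕ) : ℤ) - ((q : ℕ) : ℤ)) =
      f 0 + (∑ s ∈ Finset.range ((p : ℕ)), f ((s : ℤ) + 1))
        + ∑ s ∈ Finset.range ((p.rev : ℕ)), f (-((s : ℤ) + 1)) := by
  have h := sum_shift (fun x => f (-x)) p
  simp only [neg_sub, neg_zero, neg_neg] at h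
  rw [h]
  ring

end TBTAux
namespace TBTAux

open Finset

variable (m n : ℕ) (t : ℤ → ℤ → ℂ)

lemma hc' : flipU n * (M32 m n)ᵀ * UmnM m n = M22 m n := by
  ext p c
  rw [mul_UmnM_apply, flipU_mul_apply, Matrix.transpose_apply]
  simp [M32, M22, M21, Matrix.conjTranspose_apply, Fin.rev_inj,
    apply_ite (star : ℂ → ℂ)]

lemma hd' : UmnM m n * (M21 m n)ᵀ * flipU m = M31 m n := by
  ext c l
  rw [mul_flipU_apply, UmnM_mul_apply, Matrix.transpose_apply]
  simp [M31, M21, Matrix.conjTranspose_apply, Fin.rev_inj,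
    apply_ite (star : ℂ → ℂ)]

lemma ha' : flipU n * (M12 m n t)ᵀ * UmnM m n = M22 m n * TBT m n t - M42 m n t := by
  ext p c
  rw [Matrix.sub_apply, mul_UmnM_apply, flipU_mul_apply, Matrix.transpose_apply]
  have hM : (M22 m n * TBT m n t) p c
      = ∑ j : Fin m, t (((p : ℕ) : ℤ) - ((c.1 : ℕ) : ℤ)) (((j : ℕ) : ℤ) - ((c.2 : ℕ) : ℤ)) := by
    rw [Matrix.mul_apply, Fintype.sum_prod_type]
    simp [M22, TBT, ite_mul, one_mul, zero_mul, Finset.sum_ite_eq]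
  rw [hM, sum_shift (t (((p : ℕ) : ℤ) - ((c.1 : ℕ) : ℤ))) c.2]
  simp only [M12, Matrix.of_apply, rev_sub_rev]
  simp only [M42, Matrix.of_apply, m12e, m42e]
  ring

lemma hb' : UmnM m n * (M41 m n t)ᵀ * flipU m = TBT m n t * M31 m n - M11 m n t := by
  ext c l
  rw [Matrix.sub_apply, mul_flipU_apply, UmnM_mul_apply, Matrix.transpose_apply]
  have hM : (TBT m n t * M31 m n) c l
      = ∑ q : Fin n, t (((c.1 : ℕ) : ℤ) - ((q : ℕ) : ℤ)) (((c.2 : ℕ) : ℤ) - ((l : ℕ) : ℤ)) := by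
    rw [Matrix.mul_apply, Fintype.sum_prod_type]
    simp [M31, M21, TBT, Matrix.conjTranspose_apply, mul_ite, mul_one, mul_zero,
      Finset.sum_ite_eq, apply_ite (star : ℂ → ℂ)]
  have hs := sum_shift' (fun r => t r (((c.2 : ℕ) : ℤ) - ((l : ℕ) : ℤ))) c.1
  try dsimp only at hs
  rw [hM, hs]
  simp only [M41, M11, Matrix.of_apply, rev_sub_rev]
  ring

lemma he' : M22 m n * M31 m n = vecMulVec (onesV (Fin n)) (onesV (Fin m)) := by
  ext p l
  rw [Matrix.mul_apply, Fintype.sum_prod_type]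
  simp [M22, M31, M21, Matrix.conjTranspose_apply, vecMulVec, onesV,
    ite_mul, one_mul, zero_mul, Finset.sum_ite_eq, apply_ite (star : ℂ → ℂ)]

lemma hones : flipU n * vecMulVec (onesV (Fin n)) (onesV (Fin m)) * flipU m
    = vecMulVec (onesV (Fin n)) (onesV (Fin m)) := by
  ext p l
  rw [mul_flipU_apply, flipU_mul_apply]
  simp [vecMulVec, onesV]

lemma honesT : (vecMulVec (onesV (Fin m)) (onesV (Fin n)))ᵀ
    = vecMulVec (onesV (Fin n)) (onesV (Fin m)) := by
  ext p l
  simp [vecMulVec, onesV]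

lemma m12e_rev (r : ℤ) (l : Fin m) :
    m12e m t r l.rev
      = (∑ j : Fin m, t r (((j : ℕ) : ℤ) - ((l : ℕ) : ℤ))) - m42e m t r l := by
  rw [sum_shift (t r) l]
  simp only [m12e, m42e]
  ring

end TBTAux
namespace TBTAux

open Finset

variable (m n : ℕ) (t : ℤ → ℤ → ℂ)

lemma hbig : M42 m n t * M31 m n + M22 m n * M11 m n t
    - M22 m n * (TBT m n t * M31 m n) + flipU n * (K12 m n t)ᵀ * flipU m
    = K11 m n t := by
  ext p l
  simp only [Matrix.sub_apply, Matrix.add_apply]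
  have h1 : (M42 m n t * M31 m n) p l
      = ∑ q : Fin n, m42e m t (((p : ℕ) : ℤ) - ((q : ℕ) : ℤ)) l := by
    rw [Matrix.mul_apply, Fintype.sum_prod_type]
    simp [M42, M31, M21, Matrix.conjTranspose_apply, mul_ite, mul_one, mul_zero,
      Finset.sum_ite_eq, apply_ite (star : ℂ → ℂ)]
  have hs1 := sum_shift' (fun r => m42e m t r l) p
  try dsimp only at hs1
  rw [hs1] at h1
  have h2 : (M22 m n * M11 m n t) p l
      = (1/2 : ℂ) * (∑ j : Fin m, t 0 (((j : ℕ) : ℤ) - ((l : ℕ) : ℤ)))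
        + ∑ s ∈ Finset.range (p : ℕ),
            ∑ j : Fin m, t ((s : ℤ) + 1) (((j : ℕ) : ℤ) - ((l : ℕ) : ℤ)) := by
    rw [Matrix.mul_apply, Fintype.sum_prod_type, Finset.sum_comm]
    simp only [M22, Matrix.of_apply, ite_mul, one_mul, zero_mul, Finset.sum_ite_eq,
      Finset.mem_univ, if_true]
    simp only [M11, Matrix.of_apply]
    rw [Finset.sum_add_distrib, ← Finset.mul_sum, Finset.sum_comm]
  have h3 : (M22 m n * (TBT m n t * M31 m n)) p l
      = ∑ q : Fin n, ∑ j : Fin m,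
          t (((p : ℕ) : ℤ) - ((q : ℕ) : ℤ)) (((j : ℕ) : ℤ) - ((l : ℕ) : ℤ)) := by
    rw [Matrix.mul_apply, Fintype.sum_prod_type, Finset.sum_comm]
    simp only [M22, Matrix.of_apply, ite_mul, one_mul, zero_mul, Finset.sum_ite_eq,
      Finset.mem_univ, if_true]
    have hM : ∀ j : Fin m, (TBT m n t * M31 m n) (p, j) l
        = ∑ q : Fin n, t (((p : ℕ) : ℤ) - ((q : ℕ) : ℤ)) (((j : ℕ) : ℤ) - ((l : ℕ) : ℤ)) := by
      intro j
      rw [Matrix.mul_apply, Fintype.sum_prod_type]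
      simp [M31, M21, TBT, Matrix.conjTranspose_apply, mul_ite, mul_one, mul_zero,
        Finset.sum_ite_eq, apply_ite (star : ℂ → ℂ)]
    rw [Finset.sum_congr rfl fun j _ => hM j, Finset.sum_comm]
  have hs3 := sum_shift' (fun r => ∑ j : Fin m, t r (((j : ℕ) : ℤ) - ((l : ℕ) : ℤ))) p
  try dsimp only at hs3
  rw [hs3] at h3
  have h4 : (flipU n * (K12 m n t)ᵀ * flipU m) p l
      = (1/2 : ℂ) * m12e m t 0 l.rev
        + ∑ s ∈ Finset.range ((p.rev : ℕ)), m12e m t (-((s : ℤ) + 1)) l.rev := by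
    rw [mul_flipU_apply, flipU_mul_apply, Matrix.transpose_apply]
    simp [K12]
  rw [h1, h2, h3, h4]
  simp only [m12e_rev]
  rw [Finset.sum_sub_distrib]
  simp only [K11, Matrix.of_apply]
  ring

end TBTAux
namespace TBTAux

open Finset

variable (m n : ℕ) (t : ℤ → ℤ → ℂ)

lemma fromRows_add' {m₁ m₂ c : Type*} (A B : Matrix m₁ c ℂ) (C D : Matrix m₂ c ℂ) :
    fromRows A C + fromRows B D = fromRows (A + B) (C + D) := by
  ext (i | i) j <;> simp

lemma fromCols_sub' {n₁ n₂ r : Type*} (A B : Matrix r n₁ ℂ) (C D : Matrix r n₂ ℂ) :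
    fromCols A C - fromCols B D = fromCols (A - B) (C - D) := by
  ext i (j | j) <;> simp

lemma fromBlocks_sub' {r₁ r₂ c₁ c₂ : Type*} (a : Matrix r₁ c₁ ℂ) (b : Matrix r₁ c₂ ℂ)
    (c : Matrix r₂ c₁ ℂ) (d : Matrix r₂ c₂ ℂ) (a' : Matrix r₁ c₁ ℂ) (b' : Matrix r₁ c₂ ℂ)
    (c' : Matrix r₂ c₁ ℂ) (d' : Matrix r₂ c₂ ℂ) :
    fromBlocks a b c d - fromBlocks a' b' c' d'
      = fromBlocks (a - a') (b - b') (c - c') (d - d') := by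
  ext (i | i) (j | j) <;> simp

lemma hUU : UmnM m n * UmnM m n = 1 := by
  ext r c
  rw [mul_UmnM_apply, UmnM_apply₁]
  rw [Matrix.one_apply]
  congr 1
  exact propext ⟨fun h => by
      obtain ⟨r1, r2⟩ := r; obtain ⟨c1, c2⟩ := c
      simp only [Prod.mk.injEq] at h
      have h1 : r1 = c1 := by rw [← Fin.rev_rev r1, ← h.1, Fin.rev_rev]
      have h2 : r2 = c2 := by rw [← Fin.rev_rev r2, ← h.2, Fin.rev_rev]
      simp [h1, h2],
    fun h => by subst h; simp [Prod.ext_iff]⟩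

lemma hTt : (TBT m n t)ᵀ = UmnM m n * TBT m n t * UmnM m n := by
  ext r c
  rw [mul_UmnM_apply, UmnM_mul_apply, Matrix.transpose_apply]
  simp only [TBT, Matrix.of_apply, rev_sub_rev]

lemma hTit : ((TBT m n t)⁻¹)ᵀ = UmnM m n * (TBT m n t)⁻¹ * UmnM m n := by
  have hUinv : (UmnM m n)⁻¹ = UmnM m n := Matrix.inv_eq_right_inv (hUU m n)
  rw [Matrix.transpose_nonsing_inv, hTt, Matrix.mul_inv_rev, Matrix.mul_inv_rev, hUinv,
    Matrix.mul_assoc]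

lemma X_eq : U2 n * J2 n = fromBlocks 0 (-(flipU n)) (flipU n) 0 := by
  rw [U2, J2, Matrix.fromBlocks_multiply]
  congr 1 <;> simp

lemma Y_eq : J2 m * U2 m = fromBlocks 0 (flipU m) (-(flipU m)) 0 := by
  rw [U2, J2, Matrix.fromBlocks_multiply]
  congr 1 <;> simp

lemma hI : (U2 n * J2 n) * (Pi2 m n t)ᵀ * UmnM m n
    = -(PiHat2 m n t) + fromRows 0 (M22 m n * TBT m n t) := by
  rw [X_eq, Pi2, transpose_fromCols, fromBlocks_mul_fromRows, fromRows_mul]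
  rw [PiHat2, fromRows_neg, fromRows_add']
  rw [fromRows_ext_iff]
  constructor
  · rw [Matrix.zero_mul, zero_add, Matrix.neg_mul, Matrix.neg_mul, hc' m n, add_zero]
  · rw [Matrix.zero_mul, add_zero, ha' m n t, sub_eq_add_neg, add_comm]

lemma hII : UmnM m n * (PiHat1 m n t)ᵀ * (J2 m * U2 m)
    = Pi1 m n t - fromCols (TBT m n t * M31 m n) 0 := by
  rw [Y_eq, PiHat1, transpose_fromRows, mul_fromCols, fromCols_mul_fromBlocks]
  rw [Pi1, fromCols_sub']
  rw [fromCols_ext_iff]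
  constructor
  · rw [Matrix.mul_zero, zero_add, Matrix.mul_neg, hb' m n t, neg_sub]
  · rw [Matrix.mul_zero, add_zero, hd' m n, sub_zero]

lemma hVI : (U2 n * J2 n)
      * (fromBlocks (vecMulVec (onesV (Fin m)) (onesV (Fin n))) 0 (K12 m n t) 0 :
          Matrix (Fin m ⊕ Fin m) (Fin n ⊕ Fin n) ℂ)ᵀ
      * (J2 m * U2 m)
    = fromBlocks 0 0 (-(flipU n * (K12 m n t)ᵀ * flipU m))
        (vecMulVec (onesV (Fin n)) (onesV (Fin m))) := by
  rw [X_eq, Y_eq, Matrix.fromBlocks_transpose, Matrix.fromBlocks_multiply,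
    Matrix.fromBlocks_multiply]
  simp only [Matrix.transpose_zero, Matrix.zero_mul, Matrix.mul_zero, add_zero, zero_add,
    Matrix.neg_mul, Matrix.mul_neg, neg_zero, honesT m n, hones m n]

end TBTAux
open TBTAux in
/-- `g_{21} = −U_{2n} J_{2n} g_{12}^τ J_{2m} U_{2m}`. -/
theorem g21_from_g12 (m n : ℕ) (hm : 0 < m) (hn : 0 < n) (t : ℤ → ℤ → ℂ)
    (hT : IsUnit (TBT m n t)) :
    g21M m n t = -(U2 n * J2 n * (g12M m n t)ᵀ * J2 m * U2 m) := by
  have hdet : IsUnit (TBT m n t).det := (Matrix.isUnit_iff_isUnit_det _).mp hT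
  have hTTi : TBT m n t * (TBT m n t)⁻¹ = 1 := Matrix.mul_nonsing_inv _ hdet
  have hTiT : (TBT m n t)⁻¹ * TBT m n t = 1 := Matrix.nonsing_inv_mul _ hdet
  have hE2Ti : fromRows (0 : Matrix (Fin n) (Fin n × Fin m) ℂ) (M22 m n * TBT m n t) * (TBT m n t)⁻¹ = fromRows (0 : Matrix (Fin n) (Fin n × Fin m) ℂ) (M22 m n) := by
    rw [fromRows_mul, Matrix.zero_mul, Matrix.mul_assoc, hTTi, Matrix.mul_one]
  have hTiE1 : (TBT m n t)⁻¹ * fromCols (TBT m n t * M31 m n) (0 : Matrix (Fin n × Fin m) (Fin m) ℂ)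
      = fromCols (M31 m n) (0 : Matrix (Fin n × Fin m) (Fin m) ℂ) := by
    rw [mul_fromCols, Matrix.mul_zero, ← Matrix.mul_assoc, hTiT, Matrix.one_mul]
  have step1 : (U2 n * J2 n) * (g12M m n t)ᵀ * (J2 m * U2 m)
      = Complex.I • ((-(PiHat2 m n t) + fromRows (0 : Matrix (Fin n) (Fin n × Fin m) ℂ) (M22 m n * TBT m n t))
            * (TBT m n t)⁻¹ * (Pi1 m n t - fromCols (TBT m n t * M31 m n) (0 : Matrix (Fin n × Fin m) (Fin m) ℂ)))
        - Complex.I • (fromBlocks 0 0 (-(flipU n * (K12 m n t)ᵀ * flipU m))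
            (vecMulVec (onesV (Fin n)) (onesV (Fin m)))) := by
    rw [g12M, transpose_sub, Matrix.transpose_smul, Matrix.transpose_smul,
      Matrix.transpose_mul, Matrix.transpose_mul, hTit]
    rw [Matrix.mul_sub, Matrix.sub_mul, Matrix.mul_smul, Matrix.smul_mul,
      Matrix.mul_smul, Matrix.smul_mul]
    congr 1
    · congr 1
      rw [← hI m n t, ← hII m n t]
      simp only [Matrix.mul_assoc]
    · congr 1
      exact hVI m n t
  have expand : (-(PiHat2 m n t) + fromRows (0 : Matrix (Fin n) (Fin n × Fin m) ℂ) (M22 m n * TBT m n t))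
        * (TBT m n t)⁻¹ * (Pi1 m n t - fromCols (TBT m n t * M31 m n) (0 : Matrix (Fin n × Fin m) (Fin m) ℂ))
      = -(PiHat2 m n t * (TBT m n t)⁻¹ * Pi1 m n t)
        + PiHat2 m n t * fromCols (M31 m n) (0 : Matrix (Fin n × Fin m) (Fin m) ℂ)
        + fromRows (0 : Matrix (Fin n) (Fin n × Fin m) ℂ) (M22 m n) * Pi1 m n t
        - fromRows (0 : Matrix (Fin n) (Fin n × Fin m) ℂ) (M22 m n) * fromCols (TBT m n t * M31 m n) (0 : Matrix (Fin n × Fin m) (Fin m) ℂ) := by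
    rw [Matrix.add_mul, Matrix.neg_mul, hE2Ti, Matrix.add_mul, Matrix.neg_mul,
      Matrix.mul_sub, Matrix.mul_sub,
      Matrix.mul_assoc (PiHat2 m n t) ((TBT m n t)⁻¹)
        (fromCols (TBT m n t * M31 m n) (0 : Matrix (Fin n × Fin m) (Fin m) ℂ)), hTiE1]
    abel
  have corr : PiHat2 m n t * fromCols (M31 m n) (0 : Matrix (Fin n × Fin m) (Fin m) ℂ)
        + fromRows (0 : Matrix (Fin n) (Fin n × Fin m) ℂ) (M22 m n) * Pi1 m n t
        - fromRows (0 : Matrix (Fin n) (Fin n × Fin m) ℂ) (M22 m n) * fromCols (TBT m n t * M31 m n) (0 : Matrix (Fin n × Fin m) (Fin m) ℂ)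
        - fromBlocks 0 0 (-(flipU n * (K12 m n t)ᵀ * flipU m))
            (vecMulVec (onesV (Fin n)) (onesV (Fin m)))
      = fromBlocks (vecMulVec (onesV (Fin n)) (onesV (Fin m))) 0 (K11 m n t) 0 := by
    have h1 : PiHat2 m n t * fromCols (M31 m n) (0 : Matrix (Fin n × Fin m) (Fin m) ℂ)
        = fromBlocks (M22 m n * M31 m n) 0 (M42 m n t * M31 m n) 0 := by
      rw [PiHat2, fromRows_mul_fromCols, Matrix.mul_zero, Matrix.mul_zero]
    have h2 : fromRows (0 : Matrix (Fin n) (Fin n × Fin m) ℂ) (M22 m n) * Pi1 m n t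
        = fromBlocks 0 0 (M22 m n * M11 m n t) (M22 m n * M31 m n) := by
      rw [Pi1, fromRows_mul_fromCols, Matrix.zero_mul, Matrix.zero_mul]
    have h3 : fromRows (0 : Matrix (Fin n) (Fin n × Fin m) ℂ) (M22 m n) * fromCols (TBT m n t * M31 m n) (0 : Matrix (Fin n × Fin m) (Fin m) ℂ)
        = fromBlocks 0 0 (M22 m n * (TBT m n t * M31 m n)) 0 := by
      rw [fromRows_mul_fromCols, Matrix.zero_mul, Matrix.zero_mul, Matrix.mul_zero]
    rw [h1, h2, h3, Matrix.fromBlocks_add, fromBlocks_sub', fromBlocks_sub']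
    rw [Matrix.fromBlocks_inj]
    refine ⟨?_, ?_, ?_, ?_⟩
    · rw [add_zero, sub_zero, sub_zero, he' m n]
    · simp
    · rw [sub_neg_eq_add, hbig m n t]
    · rw [zero_add, sub_zero, he' m n, sub_self]
  have assoc : U2 n * J2 n * (g12M m n t)ᵀ * J2 m * U2 m
      = (U2 n * J2 n) * (g12M m n t)ᵀ * (J2 m * U2 m) := by
    simp only [Matrix.mul_assoc]
  rw [g21M, assoc, step1, expand, ← corr]
  simp only [smul_sub, smul_add, smul_neg]
  abel

end
end
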